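/- arXiv:1212.2336 — 2 statements merged into one kernel-verified Lean document; each statement's English description precedes it below -/
import Mathlib

section
/- Let 1 ≤ i ≤ n−1 and set B_{i,i+1} := O(V_i) ⊗_{O(V_i)^{s_i}} O(V_i ∩ V_{i+1}) ⊗_{O(V_{i+1})^{s_{i+1}}} O(V_{i+1}), where the middle factor is an O(V_i)^{s_i}- and O(V_{i+1})^{s_{i+1}}-module via restriction. Then B_{i,i+1} is free of rank 2 as a left O(V_i)-module and free of rank 2 as a right O(V_{i+1})-module. In particular, regarding B_{i,i+1} as an (O(Z),O(Z))-bimodule via the restrictions O(Z) → O(V_i) and O(Z) → O(V_{i+1}), its left annihilator in O(Z) is the kernel of O(Z) → O(V_i) and its right annihilator is the kernel of O(Z) → O(V_{i+1}). -/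
/-! Basic setup: type A_n geometric representation, Weyl lines, combinatorics. -/

set_option linter.unusedSectionVars false
set_option synthInstance.maxHeartbeats 1000000
set_option maxHeartbeats 1000000

namespace TLpaper

/-- A permutation is a transposition. -/
def IsTransposition {α : Type} [DecidableEq α] (σ : Equiv.Perm α) : Prop :=
  ∃ a b, a ≠ b ∧ σ = Equiv.swap a b

variable (k : Type) [Field k] [CharZero k] (n : ℕ)

/-- The reflecting hyperplane of a permutation `t` inside `V = {x | ∑ x i = 0}`:
the set of points of `V` fixed by permuting the coordinates by `t`.  For a
transposition `t = (a b)` this is `{x ∈ V | x a = x b}`. -/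
def Hyp (t : Equiv.Perm (Fin (n + 1))) : Set (Fin (n + 1) → k) :=
  {x | (∑ i, x i) = 0 ∧ ∀ i, x (t i) = x i}

/-- A Weyl line: a one-dimensional linear subspace of `V` which is an
intersection of a (possibly empty) family of reflecting hyperplanes. -/
def IsWeylLine (L : Set (Fin (n + 1) → k)) : Prop :=
  (∃ v : Fin (n + 1) → k, v ≠ 0 ∧ L = Set.range fun c : k => c • v) ∧
  ∃ T : Set (Equiv.Perm (Fin (n + 1))),
    (∀ t ∈ T, IsTransposition t) ∧
    L = {x | (∑ i, x i) = 0} ∩ ⋂ t ∈ T, Hyp k n t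

/-- `Z`: the union of all Weyl lines. -/
def ZZ : Set (Fin (n + 1) → k) := ⋃ L ∈ {L | IsWeylLine k n L}, L

/-- `V_t`: the union of all Weyl lines transverse to `t` (i.e. not contained in `H_t`). -/
def Vt (t : Equiv.Perm (Fin (n + 1))) : Set (Fin (n + 1) → k) :=
  ⋃ L ∈ {L | IsWeylLine k n L ∧ ¬L ⊆ Hyp k n t}, L

open Fin.NatCast in
/-- The simple transposition `s_i = (i, i+1)` (0-indexed: it swaps coordinates
`i` and `i+1` of `Fin (n+1)`, for `i < n`). -/
def simple (i : ℕ) : Equiv.Perm (Fin (n + 1)) :=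
  Equiv.swap (i : Fin (n + 1)) ((i + 1 : ℕ) : Fin (n + 1))

/-- `V_i := V_{s_i}`. -/
def Vi (i : ℕ) : Set (Fin (n + 1) → k) := Vt k n (simple n i)

/-- The action of a permutation on a subset of `k^{n+1}` (permuting coordinates). -/
def permSet (σ : Equiv.Perm (Fin (n + 1))) (W : Set (Fin (n + 1) → k)) :
    Set (Fin (n + 1) → k) :=
  (fun x => x ∘ σ) '' W

/-- `i · W := V_i ∩ (W ∪ s_i (W))`. -/
def dotAct (i : ℕ) (W : Set (Fin (n + 1) → k)) : Set (Fin (n + 1) → k) :=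
  Vi k n i ∩ (W ∪ permSet k n (simple n i) W)

/-- The set `W_{i_1 ⋯ i_m}` associated with a sequence of indices. -/
def seqSet : List ℕ → Set (Fin (n + 1) → k)
  | [] => ZZ k n
  | [i] => Vi k n i
  | i :: j :: l => dotAct k n i (seqSet (j :: l))

/-- Membership in the family `𝒱_n`. -/
def memVn (W : Set (Fin (n + 1) → k)) : Prop :=
  ∃ l : List ℕ, l ≠ [] ∧ (∀ i ∈ l, i < n) ∧ W = seqSet k n l

/-- A set of pairwise commuting transpositions. -/
def CommTranspositions (Q : Set (Equiv.Perm (Fin (n + 1)))) : Prop :=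
  (∀ t ∈ Q, IsTransposition t) ∧ ∀ t ∈ Q, ∀ t' ∈ Q, t * t' = t' * t


/-! Coordinate rings of subvarieties of `k^{n+1}`. -/

noncomputable section

/-- The ring `O(X)` of regular functions on `X`: the quotient of the polynomial ring
`k[X_0, …, X_n]` by the vanishing ideal of `X`. -/
def O (X : Set (Fin (n + 1) → k)) : Type :=
  MvPolynomial (Fin (n + 1)) k ⧸ MvPolynomial.vanishingIdeal k X

instance (X : Set (Fin (n + 1) → k)) : CommRing (O k n X) :=
  inferInstanceAs (CommRing (MvPolynomial (Fin (n + 1)) k ⧸ MvPolynomial.vanishingIdeal k X))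

theorem vanishingIdeal_anti {X Y : Set (Fin (n + 1) → k)} (h : X ⊆ Y) :
    MvPolynomial.vanishingIdeal k Y ≤ MvPolynomial.vanishingIdeal k X := fun p hp => by
  rw [MvPolynomial.mem_vanishingIdeal_iff] at hp ⊢
  exact fun x hx => hp x (h hx)

/-- The (surjective) restriction homomorphism `O(Y) → O(X)` for `X ⊆ Y`. -/
def res {X Y : Set (Fin (n + 1) → k)} (h : X ⊆ Y) : O k n Y →+* O k n X :=
  Ideal.Quotient.factor (vanishingIdeal_anti k n h)

open Classical in
/-- The ring endomorphism of `O(X)` induced by a permutation `σ` of the coordinates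
(when `X` is `σ`-stable; the definition branches on this (true, in our uses)
stability condition to be total). -/
def permO (σ : Equiv.Perm (Fin (n + 1))) (X : Set (Fin (n + 1) → k)) :
    O k n X →+* O k n X :=
  if h : ∀ x ∈ X, x ∘ σ ∈ X then
    Ideal.Quotient.lift _
      ((Ideal.Quotient.mk _).comp (MvPolynomial.rename (R := k) ⇑σ).toRingHom)
      (fun p hp => by
        have hmem : (MvPolynomial.rename (R := k) ⇑σ) p ∈
            MvPolynomial.vanishingIdeal k X := by
          rw [MvPolynomial.mem_vanishingIdeal_iff]
          intro x hx
          rw [MvPolynomial.aeval_rename]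
          exact (MvPolynomial.mem_vanishingIdeal_iff.1 hp) _ (h x hx)
        exact Ideal.Quotient.eq_zero_iff_mem.2 hmem)
  else RingHom.id _

/-- The fixed subalgebra `O(V_i)^{s_i}` of `O(V_i)` under the automorphism induced
by the simple transposition `s_i`. -/
def fixedO (i : ℕ) : Subring (O k n (Vi k n i)) :=
  RingHom.eqLocus (permO k n (simple n i) (Vi k n i)) (RingHom.id _)

open Fin.NatCast in
/-- The image `f_i` of `X_i − X_{i+1}` in the coordinate ring `O(X)`. -/
def fbar (X : Set (Fin (n + 1) → k)) (i : ℕ) : O k n X :=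
  Ideal.Quotient.mk _
    (MvPolynomial.X (i : Fin (n + 1)) - MvPolynomial.X ((i + 1 : ℕ) : Fin (n + 1)))

theorem Vt_subset_ZZ (t : Equiv.Perm (Fin (n + 1))) : Vt k n t ⊆ ZZ k n := by
  refine Set.iUnion₂_subset fun L hL => ?_
  exact Set.subset_iUnion₂ (s := fun L _ => L) L hL.1

theorem Vi_subset_ZZ (i : ℕ) : Vi k n i ⊆ ZZ k n := Vt_subset_ZZ k n _

theorem seqSet_subset_ZZ : ∀ l : List ℕ, seqSet k n l ⊆ ZZ k n
  | [] => subset_rfl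
  | [_] => Vi_subset_ZZ k n _
  | _ :: _ :: _ => Set.inter_subset_left.trans (Vi_subset_ZZ k n _)

end


/-! ### Geometry of Weyl lines -/

set_option maxRecDepth 10000

section KeyDecomp
open MvPolynomial
variable {k : Type} [Field k] [CharZero k] {N : ℕ}

theorem key_decomp (a b : Fin N) (hab : a ≠ b) (p : MvPolynomial (Fin N) k) :
    ∃ u w : MvPolynomial (Fin N) k,
      rename (⇑(Equiv.swap a b)) u = u ∧ rename (⇑(Equiv.swap a b)) w = w ∧
      p = u + (X a - X b) * w := by
  classical
  set s := Equiv.swap a b with hs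
  have hss : (⇑s ∘ ⇑s) = id := by
    funext x; simp [hs, Equiv.swap_apply_self]
  have hrr : ∀ q : MvPolynomial (Fin N) k, rename (⇑s) (rename (⇑s) q) = q := by
    intro q; rw [rename_rename, hss, rename_id, AlgHom.id_apply]
  -- substitution hom sending X b to X a
  set φ : MvPolynomial (Fin N) k →ₐ[k] MvPolynomial (Fin N) k :=
    aeval (fun j => if j = b then X a else X j) with hφ
  set I : Ideal (MvPolynomial (Fin N) k) := Ideal.span {X a - X b} with hI
  have key : ∀ r : MvPolynomial (Fin N) k, (X a - X b) ∣ (r - φ r) := by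
    have hhom : (Ideal.Quotient.mk I).comp φ.toRingHom = Ideal.Quotient.mk I := by
      apply MvPolynomial.ringHom_ext
      · intro r; simp [hφ]
      · intro j
        by_cases hj : j = b
        · subst hj
          simp only [RingHom.comp_apply, AlgHom.toRingHom_eq_coe, RingHom.coe_coe, hφ, aeval_X,
            if_pos rfl]
          rw [Ideal.Quotient.mk_eq_mk_iff_sub_mem]
          exact Ideal.mem_span_singleton_self _
        · simp [hφ, aeval_X, hj]
    intro r
    have : Ideal.Quotient.mk I r = Ideal.Quotient.mk I (φ r) := by
      have := DFunLike.congr_fun hhom r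
      simpa using this.symm
    rw [Ideal.Quotient.mk_eq_mk_iff_sub_mem] at this
    exact (Ideal.mem_span_singleton.mp (by simpa [hI] using this))
  have hφs : ∀ r : MvPolynomial (Fin N) k, φ (rename (⇑s) r) = φ r := by
    have hcomp : φ.comp (rename (⇑s)) = φ := by
      apply MvPolynomial.algHom_ext
      intro j
      by_cases hj : j = a
      · subst hj
        simp [hφ, hs, Equiv.swap_apply_left, hab.symm]
      · by_cases hj' : j = b
        · subst hj'
          simp [hφ, hs, Equiv.swap_apply_right]
        · simp [hφ, hs, Equiv.swap_apply_of_ne_of_ne hj hj', hj']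
    intro r; exact DFunLike.congr_fun hcomp r
  have hdvd : (X a - X b) ∣ (p - rename (⇑s) p) := by
    have h1 := key p
    have h2 := key (rename (⇑s) p)
    rw [hφs] at h2
    have : p - rename (⇑s) p = (p - φ p) - (rename (⇑s) p - φ p) := by ring
    rw [this]
    exact dvd_sub h1 h2
  obtain ⟨w0, hw0⟩ := hdvd
  have hXab : (X a - X b : MvPolynomial (Fin N) k) ≠ 0 := by
    intro h
    exact hab (MvPolynomial.X_injective (sub_eq_zero.mp h))
  have hsX : rename (⇑s) (X a - X b : MvPolynomial (Fin N) k) = X b - X a := by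
    simp [hs, rename_X, Equiv.swap_apply_left, Equiv.swap_apply_right]
  have hw0inv : rename (⇑s) w0 = w0 := by
    have h1 : rename (⇑s) (p - rename (⇑s) p) = (X b - X a) * rename (⇑s) w0 := by
      rw [hw0, map_mul, hsX]
    have h2 : rename (⇑s) (p - rename (⇑s) p) = rename (⇑s) p - p := by
      rw [map_sub, hrr]
    have h3 : rename (⇑s) p - p = -((X a - X b) * w0) := by rw [← hw0]; ring
    have h4 : (X b - X a) * rename (⇑s) w0 = -((X a - X b) * w0) := by
      rw [← h1, h2, h3]
    have h5 : (X a - X b) * (rename (⇑s) w0 - w0) = 0 := by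
      have : (X b - X a) * rename (⇑s) w0 = -((X a - X b) * rename (⇑s) w0) := by ring
      rw [this] at h4
      have := neg_injective h4
      linear_combination this
    rcases mul_eq_zero.mp h5 with h | h
    · exact absurd h hXab
    · exact sub_eq_zero.mp h
  refine ⟨C (2⁻¹ : k) * (p + rename (⇑s) p), C (2⁻¹ : k) * w0, ?_, ?_, ?_⟩
  · rw [map_mul, rename_C, map_add, hrr, add_comm]
  · rw [map_mul, rename_C, hw0inv]
  · have h2 : (2 : k) ≠ 0 := two_ne_zero
    have : (X a - X b) * (C (2⁻¹ : k) * w0) = C (2⁻¹ : k) * (p - rename (⇑s) p) := by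
      rw [hw0]; ring
    rw [this, ← mul_add]
    have he : (p + rename (⇑s) p) + (p - rename (⇑s) p) = C (2 : k) * p := by
      have h21 : (C (2:k) : MvPolynomial (Fin N) k) = 1 + 1 := by
        rw [show (2:k) = 1 + 1 from by norm_num, map_add, C_1]
      rw [h21]; ring
    rw [he, ← mul_assoc, ← C_mul]
    norm_num

end KeyDecomp

section Geometry

open MvPolynomial

variable {k : Type} [Field k] [CharZero k] {n : ℕ}

theorem weyl_sum_eq_zero {L : Set (Fin (n + 1) → k)} (hL : IsWeylLine k n L) :
    ∀ z ∈ L, (∑ i, z i) = 0 := by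
  obtain ⟨-, T, -, hLT⟩ := hL
  intro z hz
  rw [hLT] at hz
  exact hz.1

theorem mem_Vt_iff {t : Equiv.Perm (Fin (n + 1))} {x : Fin (n + 1) → k} :
    x ∈ Vt k n t ↔ ∃ L, IsWeylLine k n L ∧ ¬L ⊆ Hyp k n t ∧ x ∈ L := by
  unfold Vt
  simp only [Set.mem_iUnion, Set.mem_setOf_eq, exists_prop]
  constructor
  · rintro ⟨L, ⟨h1, h2⟩, h3⟩; exact ⟨L, h1, h2, h3⟩
  · rintro ⟨L, h1, h2, h3⟩; exact ⟨L, ⟨h1, h2⟩, h3⟩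

theorem line_subset_Vt {t : Equiv.Perm (Fin (n + 1))} {L : Set (Fin (n + 1) → k)}
    (hL : IsWeylLine k n L) (hnc : ¬L ⊆ Hyp k n t) : L ⊆ Vt k n t :=
  fun _ hy => mem_Vt_iff.mpr ⟨L, hL, hnc, hy⟩

theorem exists_coord_ne {L : Set (Fin (n + 1) → k)} (hL : IsWeylLine k n L)
    {u w : Fin (n + 1)} (hnc : ¬L ⊆ Hyp k n (Equiv.swap u w)) :
    ∃ z ∈ L, z u ≠ z w := by
  obtain ⟨z, hzL, hzn⟩ := Set.not_subset.mp hnc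
  refine ⟨z, hzL, fun h => hzn ⟨weyl_sum_eq_zero hL z hzL, fun i => ?_⟩⟩
  rcases eq_or_ne i u with rfl | hiu
  · rw [Equiv.swap_apply_left]; exact h.symm
  rcases eq_or_ne i w with rfl | hiw
  · rw [Equiv.swap_apply_right]; exact h
  · rw [Equiv.swap_apply_of_ne_of_ne hiu hiw]

theorem line_coord_ne {L : Set (Fin (n + 1) → k)} (hL : IsWeylLine k n L)
    {u w : Fin (n + 1)} (hnc : ¬L ⊆ Hyp k n (Equiv.swap u w)) {x : Fin (n + 1) → k}
    (hx : x ∈ L) (hx0 : x ≠ 0) : x u ≠ x w := by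
  obtain ⟨z, hzL, hzuw⟩ := exists_coord_ne hL hnc
  obtain ⟨⟨v, hv, hr⟩, -⟩ := hL
  rw [hr] at hzL hx
  obtain ⟨cz, hcz⟩ := hzL
  obtain ⟨cx, hcx⟩ := hx
  have hvuw : v u ≠ v w := by
    intro h
    apply hzuw
    rw [← hcz]
    simp [h]
  have hcx0 : cx ≠ 0 := by
    rintro rfl
    apply hx0
    rw [← hcx]
    simp
  rw [← hcx]
  simp only [Pi.smul_apply, smul_eq_mul]
  exact fun h => hvuw (mul_left_cancel₀ hcx0 h)

theorem three_values {L : Set (Fin (n + 1) → k)} (hL : IsWeylLine k n L)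
    {x : Fin (n + 1) → k} (hx : x ∈ L) {a b c : Fin (n + 1)}
    (hxab : x a ≠ x b) (hxbc : x b ≠ x c) : x a = x c := by
  classical
  by_contra hxac
  obtain ⟨⟨v, hv, hr⟩, T, hT, hLT⟩ := hL
  have hn1 : ((n : k) + 1) ≠ 0 := by
    have := Nat.cast_add_one_ne_zero (R := k) n
    simpa using this
  have hcard : (Finset.univ : Finset (Fin (n + 1))).card = n + 1 := by simp
  -- membership of centered indicator functions
  have hmem : ∀ e : k, (∀ i j : Fin (n+1), x i = x j → ((if x i = e then (1:k) else 0) = if x j = e then (1:k) else 0)) →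
      (fun j => (if x j = e then (1:k) else 0) - (∑ i, if x i = e then (1:k) else 0) / (n + 1)) ∈ L := by
    intro e _
    have hxL := hx
    rw [hLT] at hxL ⊢
    obtain ⟨-, hxT⟩ := hxL
    have hsum : (∑ j, ((if x j = e then (1:k) else 0) - (∑ i, if x i = e then (1:k) else 0) / (n + 1))) = 0 := by
      rw [Finset.sum_sub_distrib, Finset.sum_const, hcard]
      rw [nsmul_eq_mul, Nat.cast_add, Nat.cast_one, ← mul_div_assoc, mul_div_cancel_left₀ _ hn1, sub_self]
    refine ⟨hsum, ?_⟩
    simp only [Set.mem_iInter]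
    intro t ht
    have hxt : ∀ i, x (t i) = x i := by
      have := hxT
      simp only [Set.mem_iInter] at this
      exact (this t ht).2
    refine ⟨hsum, fun i => ?_⟩
    simp [hxt i]
  set y1 : Fin (n + 1) → k :=
    fun j => (if x j = x a then (1:k) else 0) - (∑ i, if x i = x a then (1:k) else 0) / (n + 1) with hy1
  set y2 : Fin (n + 1) → k :=
    fun j => (if x j = x b then (1:k) else 0) - (∑ i, if x i = x b then (1:k) else 0) / (n + 1) with hy2
  have hy1L : y1 ∈ L := hmem (x a) (fun i j h => by simp [h])
  have hy2L : y2 ∈ L := hmem (x b) (fun i j h => by simp [h])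
  rw [hr] at hy1L hy2L
  obtain ⟨c1, hc1⟩ := hy1L
  obtain ⟨c2, hc2⟩ := hy2L
  have h1ac : y1 a - y1 c = 1 := by
    simp only [hy1]
    rw [if_neg (fun h : x c = x a => hxac h.symm)]
    simp only [if_true]
    ring
  have h2ac : y2 a - y2 c = 0 := by
    simp only [hy2]
    rw [if_neg hxab, if_neg (fun h : x c = x b => hxbc h.symm)]
    ring
  have h2bc : y2 b - y2 c = 1 := by
    simp only [hy2]
    rw [if_neg (fun h : x c = x b => hxbc h.symm)]
    simp only [if_true]
    ring
  have e1 : c1 * (v a - v c) = 1 := by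
    rw [← h1ac, ← hc1]; simp only [Pi.smul_apply, smul_eq_mul]; ring
  have e2 : c2 * (v a - v c) = 0 := by
    rw [← h2ac, ← hc2]; simp only [Pi.smul_apply, smul_eq_mul]; ring
  have hvac : v a - v c ≠ 0 := by
    intro h; rw [h, mul_zero] at e1; exact one_ne_zero e1.symm
  have hc20 : c2 = 0 := by
    rcases mul_eq_zero.mp e2 with h | h
    · exact h
    · exact absurd h hvac
  have : y2 b - y2 c = 0 := by
    rw [← hc2, hc20]; simp
  rw [h2bc] at this
  exact one_ne_zero this

theorem comp_mem_Hyp {σ t : Equiv.Perm (Fin (n + 1))} {x : Fin (n + 1) → k} :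
    (x ∘ ⇑σ) ∈ Hyp k n t ↔ x ∈ Hyp k n (σ * t * σ⁻¹) := by
  unfold Hyp
  simp only [Set.mem_setOf_eq]
  have hsum : (∑ i, (x ∘ ⇑σ) i) = ∑ i, x i := by
    exact Equiv.sum_comp σ x
  constructor
  · rintro ⟨h0, h⟩
    refine ⟨by rw [← hsum]; exact h0, fun j => ?_⟩
    have := h (σ⁻¹ j)
    simpa [Equiv.Perm.mul_apply] using this
  · rintro ⟨h0, h⟩
    refine ⟨by rw [hsum]; exact h0, fun i => ?_⟩
    have := h (σ i)
    simpa [Equiv.Perm.mul_apply] using this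

theorem isWeylLine_comp (σ : Equiv.Perm (Fin (n + 1))) {L : Set (Fin (n + 1) → k)}
    (hL : IsWeylLine k n L) : IsWeylLine k n ((fun x => x ∘ ⇑σ) '' L) := by
  classical
  obtain ⟨⟨v, hv, hr⟩, T, hT, hLT⟩ := hL
  have hmemim : ∀ y : Fin (n+1) → k, y ∈ (fun x => x ∘ ⇑σ) '' L ↔ y ∘ ⇑σ⁻¹ ∈ L := by
    intro y
    constructor
    · rintro ⟨x, hx, rfl⟩
      have : (x ∘ ⇑σ) ∘ ⇑σ⁻¹ = x := by
        funext j; simp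
      rwa [this]
    · intro h
      exact ⟨y ∘ ⇑σ⁻¹, h, by funext j; simp⟩
  constructor
  · refine ⟨v ∘ ⇑σ, ?_, ?_⟩
    · intro h
      apply hv
      funext j
      have := congrFun h (σ⁻¹ j)
      simpa using this
    · ext y
      rw [hmemim, hr]
      constructor
      · rintro ⟨cc, hcc⟩
        refine ⟨cc, ?_⟩
        funext j
        have := congrFun hcc (σ j)
        simpa using this
      · rintro ⟨cc, rfl⟩
        exact ⟨cc, by funext j; simp⟩
  · refine ⟨(fun t => σ⁻¹ * t * σ) '' T, ?_, ?_⟩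
    · rintro t' ⟨t, htT, rfl⟩
      obtain ⟨u, w, huw, rfl⟩ := hT t htT
      refine ⟨σ⁻¹ u, σ⁻¹ w, fun h => huw (σ⁻¹.injective h), ?_⟩
      rw [Equiv.swap_apply_apply, inv_inv]
    · ext y
      rw [hmemim, hLT]
      simp only [Set.mem_inter_iff, Set.mem_setOf_eq, Set.mem_iInter]
      constructor
      · rintro ⟨h0, h⟩
        refine ⟨by
          have hs := Equiv.sum_comp σ⁻¹ y
          simp only [Function.comp_apply] at h0
          rwa [hs] at h0, ?_⟩
        rintro t' ⟨t, htT, rfl⟩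
        have := (comp_mem_Hyp (σ := σ⁻¹) (t := t) (x := y)).mp (h t htT)
        simpa [inv_inv] using this
      · rintro ⟨h0, h⟩
        refine ⟨by
          have hs := Equiv.sum_comp σ⁻¹ y
          simp only [Function.comp_apply]
          rwa [hs], fun t htT => ?_⟩
        apply (comp_mem_Hyp (σ := σ⁻¹) (t := t) (x := y)).mpr
        have := h (σ⁻¹ * t * σ) ⟨t, htT, rfl⟩
        simpa [inv_inv] using this

theorem Vt_stable {a b : Fin (n + 1)} {x : Fin (n + 1) → k}
    (hx : x ∈ Vt k n (Equiv.swap a b)) :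
    x ∘ ⇑(Equiv.swap a b) ∈ Vt k n (Equiv.swap a b) := by
  obtain ⟨L, hL, hnc, hxL⟩ := mem_Vt_iff.mp hx
  refine mem_Vt_iff.mpr ⟨(fun z => z ∘ ⇑(Equiv.swap a b)) '' L, isWeylLine_comp _ hL, ?_,
    Set.mem_image_of_mem _ hxL⟩
  obtain ⟨z, hzL, hzab⟩ := exists_coord_ne hL hnc
  refine Set.not_subset.mpr ⟨z ∘ ⇑(Equiv.swap a b), Set.mem_image_of_mem _ hzL, fun hmem => ?_⟩
  have := hmem.2 b
  simp only [Function.comp_apply, Equiv.swap_apply_right, Equiv.swap_apply_left] at this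
  exact hzab this.symm

theorem covering {a b c : Fin (n + 1)} (hac : a ≠ c) (hbc : b ≠ c)
    {x : Fin (n + 1) → k} (hx : x ∈ Vt k n (Equiv.swap a b)) :
    x ∈ Vt k n (Equiv.swap a b) ∩ Vt k n (Equiv.swap b c) ∨
      x ∘ ⇑(Equiv.swap a b) ∈ Vt k n (Equiv.swap a b) ∩ Vt k n (Equiv.swap b c) := by
  obtain ⟨L, hL, hnc, hxL⟩ := mem_Vt_iff.mp hx
  by_cases hcc : L ⊆ Hyp k n (Equiv.swap b c)
  · right
    obtain ⟨z, hzL, hzab⟩ := exists_coord_ne hL hnc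
    have hzbc : z b = z c := by
      have := (hcc hzL).2 c
      simpa [Equiv.swap_apply_right] using this
    have hL' : IsWeylLine k n ((fun w => w ∘ ⇑(Equiv.swap a b)) '' L) :=
      isWeylLine_comp _ hL
    have hmemx : x ∘ ⇑(Equiv.swap a b) ∈ (fun w => w ∘ ⇑(Equiv.swap a b)) '' L :=
      Set.mem_image_of_mem _ hxL
    have hnc1 : ¬((fun w => w ∘ ⇑(Equiv.swap a b)) '' L) ⊆ Hyp k n (Equiv.swap a b) := by
      refine Set.not_subset.mpr ⟨z ∘ ⇑(Equiv.swap a b), Set.mem_image_of_mem _ hzL,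
        fun hmem => ?_⟩
      have := hmem.2 b
      simp only [Function.comp_apply, Equiv.swap_apply_right, Equiv.swap_apply_left] at this
      exact hzab this.symm
    have hnc2 : ¬((fun w => w ∘ ⇑(Equiv.swap a b)) '' L) ⊆ Hyp k n (Equiv.swap b c) := by
      refine Set.not_subset.mpr ⟨z ∘ ⇑(Equiv.swap a b), Set.mem_image_of_mem _ hzL,
        fun hmem => ?_⟩
      have := hmem.2 c
      simp only [Function.comp_apply, Equiv.swap_apply_right,
        Equiv.swap_apply_of_ne_of_ne hac.symm hbc.symm,
        Equiv.swap_apply_left] at this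
      -- this : z (swap a b b) = z (swap a b c), i.e. z a = z c
      apply hzab
      rw [this, ← hzbc]
    exact ⟨mem_Vt_iff.mpr ⟨_, hL', hnc1, hmemx⟩, mem_Vt_iff.mpr ⟨_, hL', hnc2, hmemx⟩⟩
  · left
    exact ⟨hx, mem_Vt_iff.mpr ⟨L, hL, hcc, hxL⟩⟩

theorem inter_coord_eq {a b c : Fin (n + 1)} {x : Fin (n + 1) → k}
    (hx : x ∈ Vt k n (Equiv.swap a b) ∩ Vt k n (Equiv.swap b c)) : x a = x c := by
  rcases eq_or_ne x 0 with rfl | hx0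
  · rfl
  obtain ⟨L1, hL1, hnc1, hxL1⟩ := mem_Vt_iff.mp hx.1
  obtain ⟨L2, hL2, hnc2, hxL2⟩ := mem_Vt_iff.mp hx.2
  exact three_values hL1 hxL1 (line_coord_ne hL1 hnc1 hxL1 hx0)
    (line_coord_ne hL2 hnc2 hxL2 hx0)

theorem eval_vanish_of_vanish_ne_zero {t : Equiv.Perm (Fin (n + 1))}
    (w : MvPolynomial (Fin (n + 1)) k)
    (h : ∀ x ∈ Vt k n t, x ≠ 0 → MvPolynomial.eval x w = 0) :
    ∀ x ∈ Vt k n t, MvPolynomial.eval x w = 0 := by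
  intro x hx
  obtain ⟨L, hL, hnc, hxL⟩ := mem_Vt_iff.mp hx
  have hsub : L ⊆ Vt k n t := line_subset_Vt hL hnc
  obtain ⟨⟨v, hv, hr⟩, -⟩ := hL
  -- the univariate polynomial d ↦ eval (d • v) w
  set φ : MvPolynomial (Fin (n + 1)) k →+* Polynomial k :=
    MvPolynomial.eval₂Hom (Polynomial.C : k →+* Polynomial k)
      (fun j => Polynomial.C (v j) * Polynomial.X) with hφ
  have hev : ∀ d : k, Polynomial.eval d (φ w) = MvPolynomial.eval (d • v) w := by
    intro d
    have hcomp : (Polynomial.evalRingHom d).comp φ =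
        (MvPolynomial.eval (d • v) : MvPolynomial (Fin (n+1)) k →+* k) := by
      apply MvPolynomial.ringHom_ext
      · intro r; simp [hφ]
      · intro j
        simp [hφ]
        ring
    exact DFunLike.congr_fun hcomp w
  have hvmem : ∀ d : k, d • v ∈ Vt k n t := by
    intro d
    apply hsub
    rw [hr]
    exact ⟨d, rfl⟩
  have hφw : φ w = 0 := by
    apply Polynomial.eq_zero_of_infinite_isRoot
    apply Set.Infinite.mono (s := {d : k | d ≠ 0})
    · intro d hd
      have hdv : d • v ≠ 0 := by
        intro hdv
        apply hv
        funext j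
        have := congrFun hdv j
        simp only [Pi.smul_apply, smul_eq_mul, Pi.zero_apply] at this
        have := mul_eq_zero.mp this
        rcases this with h' | h'
        · exact absurd h' hd
        · simpa using h'
      show (φ w).IsRoot d
      rw [Polynomial.IsRoot, hev d]
      exact h (d • v) (hvmem d) hdv
    · have : ({d : k | d ≠ 0}) = ({0}ᶜ : Set k) := by
        ext d; simp
      rw [this]
      exact Set.Finite.infinite_compl (Set.finite_singleton 0)
  rw [hr] at hxL
  obtain ⟨cx, hcx⟩ := hxL
  rw [← hcx, ← hev cx, hφw]
  simp

end Geometry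


/-! ### Ring-level lemmas -/

noncomputable section RingLevel

open MvPolynomial

variable {k : Type} [Field k] [CharZero k] {n : ℕ}

/-- `O`-typed quotient map. -/
def mkO (W : Set (Fin (n + 1) → k)) (p : MvPolynomial (Fin (n + 1)) k) : O k n W :=
  Ideal.Quotient.mk _ p

theorem mkO_surjective (W : Set (Fin (n + 1) → k)) :
    Function.Surjective (mkO (k := k) (n := n) W) :=
  Ideal.Quotient.mk_surjective

theorem mkO_add (W : Set (Fin (n + 1) → k)) (p q : MvPolynomial (Fin (n + 1)) k) :
    mkO W (p + q) = mkO W p + mkO (k := k) (n := n) W q := map_add _ _ _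

theorem mkO_mul (W : Set (Fin (n + 1) → k)) (p q : MvPolynomial (Fin (n + 1)) k) :
    mkO W (p * q) = mkO W p * mkO (k := k) (n := n) W q := map_mul _ _ _

theorem mkO_sub (W : Set (Fin (n + 1) → k)) (p q : MvPolynomial (Fin (n + 1)) k) :
    mkO W (p - q) = mkO W p - mkO (k := k) (n := n) W q := map_sub _ _ _

theorem mkO_one (W : Set (Fin (n + 1) → k)) : mkO (k := k) (n := n) W 1 = 1 := map_one _

/-- The image of `X a - X b` in `O(W)`. -/
def fdiff (W : Set (Fin (n + 1) → k)) (a b : Fin (n + 1)) : O k n W :=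
  mkO W (X a - X b)

theorem mkO_eq_mkO_iff {W : Set (Fin (n + 1) → k)} {p q : MvPolynomial (Fin (n + 1)) k} :
    mkO (k := k) (n := n) W p = mkO W q ↔ ∀ x ∈ W, eval x p = eval x q := by
  have : (Ideal.Quotient.mk (MvPolynomial.vanishingIdeal k W) p =
      Ideal.Quotient.mk (MvPolynomial.vanishingIdeal k W) q) ↔
      ∀ x ∈ W, eval x p = eval x q := by
    rw [Ideal.Quotient.mk_eq_mk_iff_sub_mem, MvPolynomial.mem_vanishingIdeal_iff]
    constructor
    · intro h x hx
      have := h x hx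
      rw [map_sub] at this
      exact sub_eq_zero.mp this
    · intro h x hx
      rw [map_sub]
      exact sub_eq_zero.mpr (h x hx)
  exact this

theorem mkO_eq_zero_iff {W : Set (Fin (n + 1) → k)} {p : MvPolynomial (Fin (n + 1)) k} :
    mkO (k := k) (n := n) W p = 0 ↔ ∀ x ∈ W, eval x p = 0 := by
  have : (Ideal.Quotient.mk (MvPolynomial.vanishingIdeal k W) p = 0) ↔
      ∀ x ∈ W, eval x p = 0 := by
    rw [Ideal.Quotient.eq_zero_iff_mem, MvPolynomial.mem_vanishingIdeal_iff]
    exact Iff.rfl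
  exact this

theorem res_mkO {X Y : Set (Fin (n + 1) → k)} (h : X ⊆ Y)
    (p : MvPolynomial (Fin (n + 1)) k) :
    res k n h (mkO Y p) = mkO X p :=
  Ideal.Quotient.factor_mk _ _

theorem permO_mkO {t : Equiv.Perm (Fin (n + 1))} {X : Set (Fin (n + 1) → k)}
    (hstab : ∀ x ∈ X, x ∘ ⇑t ∈ X) (p : MvPolynomial (Fin (n + 1)) k) :
    permO k n t X (mkO X p) = mkO X (rename ⇑t p) := by
  have h : permO k n t X = _ := dif_pos hstab
  rw [h]
  rfl

theorem Vt_swap_stable {a b : Fin (n + 1)} {t : Equiv.Perm (Fin (n + 1))}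
    (ht : t = Equiv.swap a b) : ∀ x ∈ Vt k n t, x ∘ ⇑t ∈ Vt k n t := by
  subst ht
  exact fun x hx => Vt_stable hx

theorem mem_fixed_iff {a b : Fin (n + 1)} {t : Equiv.Perm (Fin (n + 1))}
    (ht : t = Equiv.swap a b) (p : MvPolynomial (Fin (n + 1)) k) :
    mkO (Vt k n t) p ∈
        RingHom.eqLocus (permO k n t (Vt k n t)) (RingHom.id (O k n (Vt k n t))) ↔
      ∀ x ∈ Vt k n t, eval (x ∘ ⇑t) p = eval x p := by
  have hstab := Vt_swap_stable (k := k) (n := n) ht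
  have h0 : (mkO (Vt k n t) p ∈
      RingHom.eqLocus (permO k n t (Vt k n t)) (RingHom.id (O k n (Vt k n t)))) ↔
      permO k n t (Vt k n t) (mkO (Vt k n t) p) = mkO (Vt k n t) p := Iff.rfl
  rw [h0, permO_mkO hstab, mkO_eq_mkO_iff]
  constructor
  · intro h x hx
    have := h x hx
    rwa [eval_rename] at this
  · intro h x hx
    rw [eval_rename]
    exact h x hx

/-- If an `s`-invariant combination `u + w·(Xₐ - X_b)` vanishes on `V_t`,
then both parts vanish. -/
theorem parts_vanish {a b : Fin (n + 1)} (hab : a ≠ b) {t : Equiv.Perm (Fin (n + 1))}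
    (ht : t = Equiv.swap a b) (pu pw : MvPolynomial (Fin (n + 1)) k)
    (hu : ∀ x ∈ Vt k n t, eval (x ∘ ⇑t) pu = eval x pu)
    (hw : ∀ x ∈ Vt k n t, eval (x ∘ ⇑t) pw = eval x pw)
    (h0 : ∀ x ∈ Vt k n t, eval x pu + eval x pw * (x a - x b) = 0) :
    (∀ x ∈ Vt k n t, eval x pu = 0) ∧ (∀ x ∈ Vt k n t, eval x pw = 0) := by
  have hstab := Vt_swap_stable (k := k) (n := n) ht
  have hcoord : ∀ x : Fin (n + 1) → k, (x ∘ ⇑t) a = x b ∧ (x ∘ ⇑t) b = x a := by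
    intro x
    subst ht
    constructor
    · simp [Equiv.swap_apply_left]
    · simp [Equiv.swap_apply_right]
  have hpu : ∀ x ∈ Vt k n t, eval x pu = 0 := by
    intro x hx
    have h1 := h0 x hx
    have h2 := h0 (x ∘ ⇑t) (hstab x hx)
    rw [hu x hx, hw x hx, (hcoord x).1, (hcoord x).2] at h2
    have h3 : (2 : k) * eval x pu = 0 := by linear_combination h1 + h2
    rcases mul_eq_zero.mp h3 with h | h
    · exact absurd h two_ne_zero
    · exact h
  refine ⟨hpu, ?_⟩
  apply eval_vanish_of_vanish_ne_zero
  intro x hx hx0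
  obtain ⟨L, hL, hnc, hxL⟩ := mem_Vt_iff.mp hx
  have hxab : x a ≠ x b := by
    subst ht
    exact line_coord_ne hL hnc hxL hx0
  have h1 := h0 x hx
  rw [hpu x hx, zero_add] at h1
  rcases mul_eq_zero.mp h1 with h | h
  · exact h
  · exact absurd (sub_eq_zero.mp h) hxab

theorem mk_comb (W : Set (Fin (n + 1) → k)) (a b : Fin (n + 1))
    (u w : MvPolynomial (Fin (n + 1)) k) :
    mkO W (u + w * (X a - X b)) = mkO W u + mkO W w * fdiff W a b := by
  rw [mkO_add, mkO_mul]
  rfl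

/-- `O(V_t)` is free of rank 2 over the `s`-invariants, with basis `{1, x_a - x_b}`. -/
theorem freeBasis_gen {a b : Fin (n + 1)} (hab : a ≠ b) {t : Equiv.Perm (Fin (n + 1))}
    (ht : t = Equiv.swap a b) (x : O k n (Vt k n t)) :
    ∃! cd : (RingHom.eqLocus (permO k n t (Vt k n t)) (RingHom.id (O k n (Vt k n t)))) ×
            (RingHom.eqLocus (permO k n t (Vt k n t)) (RingHom.id (O k n (Vt k n t)))),
      x = (cd.1 : O k n (Vt k n t)) + (cd.2 : O k n (Vt k n t)) *
        fdiff (Vt k n t) a b := by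
  obtain ⟨p, rfl⟩ := mkO_surjective (Vt k n t) x
  obtain ⟨u, w, hu, hw, hp⟩ := key_decomp a b hab p
  have hsw : ⇑t = ⇑(Equiv.swap a b) := by rw [ht]
  have huinv : ∀ x ∈ Vt k n t, eval (x ∘ ⇑t) u = eval x u := by
    intro x hx
    calc eval (x ∘ ⇑t) u = eval x (rename ⇑t u) := (eval_rename _ _ _).symm
    _ = eval x u := by rw [hsw, hu]
  have hwinv : ∀ x ∈ Vt k n t, eval (x ∘ ⇑t) w = eval x w := by
    intro x hx
    calc eval (x ∘ ⇑t) w = eval x (rename ⇑t w) := (eval_rename _ _ _).symm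
    _ = eval x w := by rw [hsw, hw]
  have hpm : p = u + w * (X a - X b) := by rw [hp]; ring
  refine ⟨⟨⟨mkO _ u, (mem_fixed_iff ht u).mpr huinv⟩,
           ⟨mkO _ w, (mem_fixed_iff ht w).mpr hwinv⟩⟩, ?_, ?_⟩
  · show mkO (Vt k n t) p = mkO _ u + mkO _ w * fdiff (Vt k n t) a b
    rw [show p = u + w * (X a - X b) from hpm, mk_comb]
  · rintro ⟨⟨u1, hu1⟩, ⟨w1, hw1⟩⟩ heq
    obtain ⟨pu1, hpu1⟩ := mkO_surjective (Vt k n t) u1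
    obtain ⟨pw1, hpw1⟩ := mkO_surjective (Vt k n t) w1
    simp only at heq
    have hmk1 : mkO (Vt k n t) (pu1 + pw1 * (X a - X b)) =
        mkO (Vt k n t) (u + w * (X a - X b)) := by
      rw [mk_comb, mk_comb, hpu1, hpw1, ← heq]
      exact congrArg _ hpm
    have hvan0 := mkO_eq_mkO_iff.mp hmk1
    have hvan : ∀ x ∈ Vt k n t, eval x (pu1 - u) + eval x (pw1 - w) * (x a - x b) = 0 := by
      intro x hx
      have := hvan0 x hx
      simp only [map_add, map_mul, map_sub, eval_X] at this ⊢
      linear_combination this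
    have hu1inv : ∀ x ∈ Vt k n t, eval (x ∘ ⇑t) (pu1 - u) = eval x (pu1 - u) := by
      intro x hx
      have ha := (mem_fixed_iff ht pu1).mp (by rwa [hpu1]) x hx
      have hb := huinv x hx
      rw [map_sub, map_sub, ha, hb]
    have hw1inv : ∀ x ∈ Vt k n t, eval (x ∘ ⇑t) (pw1 - w) = eval x (pw1 - w) := by
      intro x hx
      have ha := (mem_fixed_iff ht pw1).mp (by rwa [hpw1]) x hx
      have hb := hwinv x hx
      rw [map_sub, map_sub, ha, hb]
    obtain ⟨hz1, hz2⟩ := parts_vanish hab ht _ _ hu1inv hw1inv hvan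
    have e1 : u1 = mkO (Vt k n t) u := by
      rw [← hpu1]
      apply mkO_eq_mkO_iff.mpr
      exact fun x hx => sub_eq_zero.mp (by simpa [map_sub] using hz1 x hx)
    have e2 : w1 = mkO (Vt k n t) w := by
      rw [← hpw1]
      apply mkO_eq_mkO_iff.mpr
      exact fun x hx => sub_eq_zero.mp (by simpa [map_sub] using hz2 x hx)
    rw [Prod.mk.injEq]
    exact ⟨Subtype.ext e1, Subtype.ext e2⟩

/-- Restriction from the invariants of `O(V_t)` to `O(V_t ∩ V_{t'})` is a ring
isomorphism, for `t = (a b)`, `t' = (b c)`. -/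
theorem resFixed_bij {a b c : Fin (n + 1)} (hab : a ≠ b) (hbc : b ≠ c) (hac : a ≠ c)
    {t : Equiv.Perm (Fin (n + 1))} (ht : t = Equiv.swap a b)
    {Y : Set (Fin (n + 1) → k)} (hY : Y = Vt k n t ∩ Vt k n (Equiv.swap b c))
    (hsub : Y ⊆ Vt k n t) :
    Function.Bijective ((res k n hsub).comp
      (RingHom.eqLocus (permO k n t (Vt k n t)) (RingHom.id (O k n (Vt k n t)))).subtype) := by
  constructor
  · rw [injective_iff_map_eq_zero]
    rintro ⟨r, hr⟩ h0
    obtain ⟨p, hp⟩ := mkO_surjective (Vt k n t) r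
    rw [← hp] at hr
    have h0' : res k n hsub (mkO (Vt k n t) p) = 0 := by
      rw [hp]; exact h0
    have hinv := (mem_fixed_iff ht p).mp hr
    have hvanY : ∀ x ∈ Y, eval x p = 0 := by
      rw [res_mkO, mkO_eq_zero_iff] at h0'
      exact h0'
    have hvanW : ∀ x ∈ Vt k n t, eval x p = 0 := by
      intro x hx
      have hcov : x ∈ Vt k n (Equiv.swap a b) ∩ Vt k n (Equiv.swap b c) ∨
          x ∘ ⇑(Equiv.swap a b) ∈ Vt k n (Equiv.swap a b) ∩ Vt k n (Equiv.swap b c) := by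
        apply covering hac hbc
        rw [← ht]
        exact hx
      rcases hcov with hcase | hcase
      · exact hvanY x (by rw [hY, ht]; exact hcase)
      · have : eval (x ∘ ⇑t) p = 0 := hvanY (x ∘ ⇑t) (by rw [hY, ht]; exact hcase)
        rw [hinv x hx] at this
        exact this
    have hfin : mkO (Vt k n t) p = 0 := mkO_eq_zero_iff.mpr hvanW
    exact Subtype.ext (show r = 0 by rw [← hp]; exact hfin)
  · intro y
    obtain ⟨p, rfl⟩ := mkO_surjective Y y
    obtain ⟨u, w, hu, hw, hp⟩ := key_decomp a b hab p
    set h2 : MvPolynomial (Fin (n + 1)) k := X c + X c - X a - X b with hh2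
    set q : MvPolynomial (Fin (n + 1)) k := u + h2 * w with hq
    have hsc : Equiv.swap a b c = c := Equiv.swap_apply_of_ne_of_ne hac.symm hbc.symm
    have hqinv : rename ⇑(Equiv.swap a b) q = q := by
      rw [hq, map_add, map_mul, hu, hw, hh2]
      simp only [map_sub, map_add, rename_X, Equiv.swap_apply_left, Equiv.swap_apply_right, hsc]
      ring_nf
    have hqfix : mkO (Vt k n t) q ∈
        RingHom.eqLocus (permO k n t (Vt k n t)) (RingHom.id (O k n (Vt k n t))) := by
      apply (mem_fixed_iff ht q).mpr
      intro x hx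
      calc eval (x ∘ ⇑t) q = eval x (rename ⇑t q) := (eval_rename _ _ _).symm
      _ = eval x q := by rw [show ⇑t = ⇑(Equiv.swap a b) from by rw [ht], hqinv]
    refine ⟨⟨mkO _ q, hqfix⟩, ?_⟩
    show res k n hsub (mkO (Vt k n t) q) = mkO Y p
    rw [res_mkO, mkO_eq_mkO_iff]
    intro x hx
    have hxac : x a = x c := by
      apply inter_coord_eq (b := b)
      rw [hY, ht] at hx
      exact hx
    rw [hp, hq, hh2]
    simp only [map_add, map_mul, map_sub, eval_X]
    rw [← hxac]
    ring

end RingLevel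

open scoped TensorProduct

/-- `S` is free of rank `m` as a module over `R`, the action being through the ring
homomorphism `f : R →+* S` (i.e. `r • x := f r * x`): there is a basis of size `m`. -/
def FreeRankVia {R S : Type} [CommRing R] [CommRing S] (f : R →+* S) (m : ℕ) : Prop :=
  ∃ b : Fin m → S, ∀ x : S, ∃! c : Fin m → R, x = ∑ j, f (c j) * b j

section Abstract

variable {R S Mk R' S' : Type}
  [CommRing R] [CommRing S] [CommRing Mk] [CommRing R'] [CommRing S']
  [Algebra R S] [Algebra R Mk] [Algebra R' Mk] [Algebra R' S']

theorem tensorFree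
    (hphi : Function.Bijective (algebraMap R Mk))
    (hpsi : Function.Bijective (algebraMap R' Mk))
    (f : S) (hSf : ∀ x : S, ∃! cd : R × R,
      x = algebraMap R S cd.1 + algebraMap R S cd.2 * f)
    (f' : S') (hS'f : ∀ x : S', ∃! cd : R' × R',
      x = algebraMap R' S' cd.1 + algebraMap R' S' cd.2 * f') :
    letI : Algebra R' (S ⊗[R] Mk) :=
      ((Algebra.TensorProduct.includeRight.toRingHom : Mk →+* S ⊗[R] Mk).comp
        (algebraMap R' Mk)).toAlgebra
    letI B := (S ⊗[R] Mk) ⊗[R'] S'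
    letI ℓ : S →+* B := (Algebra.TensorProduct.includeLeftRingHom :
        (S ⊗[R] Mk) →+* B).comp
      (Algebra.TensorProduct.includeLeftRingHom : S →+* S ⊗[R] Mk)
    letI rr : S' →+* B := Algebra.TensorProduct.includeRight.toRingHom
    FreeRankVia ℓ 2 ∧ FreeRankVia rr 2 ∧
      (∀ s : S, ℓ s = 0 → s = 0) ∧ (∀ y : S', rr y = 0 → y = 0) := by
  classical
  letI instR'T1 : Algebra R' (S ⊗[R] Mk) :=
    ((Algebra.TensorProduct.includeRight.toRingHom : Mk →+* S ⊗[R] Mk).comp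
      (algebraMap R' Mk)).toAlgebra
  set B := (S ⊗[R] Mk) ⊗[R'] S' with hB
  set ℓ : S →+* B := (Algebra.TensorProduct.includeLeftRingHom :
      (S ⊗[R] Mk) →+* B).comp
    (Algebra.TensorProduct.includeLeftRingHom : S →+* S ⊗[R] Mk) with hℓ
  set rr : S' →+* B := Algebra.TensorProduct.includeRight.toRingHom with hrr
  -- ring equivs
  set Φ : R ≃+* Mk := RingEquiv.ofBijective (algebraMap R Mk) hphi with hΦ
  set Ψ : R' ≃+* Mk := RingEquiv.ofBijective (algebraMap R' Mk) hpsi with hΨ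
  have hΦap : ∀ r : R, Φ r = algebraMap R Mk r := fun r => rfl
  have hΨap : ∀ r : R', Ψ r = algebraMap R' Mk r := fun r => rfl
  have hΦsm : ∀ r : R, Φ.symm (algebraMap R Mk r) = r := fun r => by
    rw [← hΦap]; exact Φ.symm_apply_apply r
  have hΨsm : ∀ r : R', Ψ.symm (algebraMap R' Mk r) = r := fun r => by
    rw [← hΨap]; exact Ψ.symm_apply_apply r
  -- the algebra hom Mk →ₐ[R] S
  set ν : Mk →ₐ[R] S :=
    { toRingHom := (algebraMap R S).comp Φ.symm.toRingHom
      commutes' := fun r => by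
        show (algebraMap R S) (Φ.symm ((algebraMap R Mk) r)) = _
        rw [hΦsm r] } with hν
  have hνap : ∀ m : Mk, ν m = algebraMap R S (Φ.symm m) := fun m => rfl
  set μ : S ⊗[R] Mk →ₐ[R] S :=
    Algebra.TensorProduct.productMap (AlgHom.id R S) ν with hμ
  have hμtmul : ∀ (x : S) (m : Mk), μ (x ⊗ₜ m) = x * ν m := fun x m => by
    rw [hμ, Algebra.TensorProduct.productMap_apply_tmul]; rfl
  set ρ : R' →+* S := (ν.toRingHom).comp (algebraMap R' Mk) with hρ
  have hρap : ∀ c : R', ρ c = algebraMap R S (Φ.symm (algebraMap R' Mk c)) := fun c => rfl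
  -- algebraMap R' T1
  have halgT1 : ∀ c : R', algebraMap R' (S ⊗[R] Mk) c =
      (1 : S) ⊗ₜ[R] (algebraMap R' Mk c) := fun c => rfl
  have hsmulT1 : ∀ (c : R') (t : S ⊗[R] Mk),
      c • t = ((1 : S) ⊗ₜ[R] (algebraMap R' Mk c)) * t := fun c t => by
    rw [Algebra.smul_def, halgT1]
  have hsmulS' : ∀ (c : R') (y : S'), c • y = algebraMap R' S' c * y := fun c y =>
    Algebra.smul_def c y
  have hμsc : ∀ (c : R') (t : S ⊗[R] Mk), μ (c • t) = ρ c * μ t := by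
    intro c t
    rw [hsmulT1, map_mul, hμtmul]
    simp only [one_mul]
    rfl
  -- coordinates on S'
  choose lam' hlam' using fun y : S' => (hS'f y).exists
  have lam'u : ∀ (y : S') (cd : R' × R'),
      y = algebraMap R' S' cd.1 + algebraMap R' S' cd.2 * f' → lam' y = cd :=
    fun y cd h => ExistsUnique.unique (hS'f y) (hlam' y) h
  have lam'one : lam' (1 : S') = (1, 0) := lam'u 1 (1, 0) (by simp)
  have lam'f' : lam' f' = (0, 1) := lam'u f' (0, 1) (by simp)
  have lam'add : ∀ y z : S', lam' (y + z) = lam' y + lam' z := by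
    intro y z
    apply lam'u
    rw [Prod.fst_add, Prod.snd_add, map_add, map_add]
    calc y + z = (algebraMap R' S' (lam' y).1 + algebraMap R' S' (lam' y).2 * f') +
        (algebraMap R' S' (lam' z).1 + algebraMap R' S' (lam' z).2 * f') := by
          rw [← hlam' y, ← hlam' z]
    _ = _ := by ring
  have lam'mul : ∀ (c : R') (y : S'), lam' (algebraMap R' S' c * y) =
      (c * (lam' y).1, c * (lam' y).2) := by
    intro c y
    apply lam'u
    simp only [map_mul]
    calc algebraMap R' S' c * y =
        algebraMap R' S' c * (algebraMap R' S' (lam' y).1 +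
          algebraMap R' S' (lam' y).2 * f') := by rw [← hlam' y]
    _ = _ := by ring
  -- coordinates on S
  choose lamS hlamS using fun x : S => (hSf x).exists
  have lamSu : ∀ (x : S) (cd : R × R),
      x = algebraMap R S cd.1 + algebraMap R S cd.2 * f → lamS x = cd :=
    fun x cd h => ExistsUnique.unique (hSf x) (hlamS x) h
  have lamSone : lamS (1 : S) = (1, 0) := lamSu 1 (1, 0) (by simp)
  have lamSf : lamS f = (0, 1) := lamSu f (0, 1) (by simp)
  have lamSadd : ∀ x z : S, lamS (x + z) = lamS x + lamS z := by
    intro x z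
    apply lamSu
    rw [Prod.fst_add, Prod.snd_add, map_add, map_add]
    calc x + z = (algebraMap R S (lamS x).1 + algebraMap R S (lamS x).2 * f) +
        (algebraMap R S (lamS z).1 + algebraMap R S (lamS z).2 * f) := by
          rw [← hlamS x, ← hlamS z]
    _ = _ := by ring
  have lamSmul : ∀ (r : R) (x : S), lamS (algebraMap R S r * x) =
      (r * (lamS x).1, r * (lamS x).2) := by
    intro r x
    apply lamSu
    simp only [map_mul]
    calc algebraMap R S r * x =
        algebraMap R S r * (algebraMap R S (lamS x).1 +
          algebraMap R S (lamS x).2 * f) := by rw [← hlamS x]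
    _ = _ := by ring
  -- basis elements
  set b0 : B := 1 with hb0
  set b1 : B := ((1 : S) ⊗ₜ[R] (1 : Mk)) ⊗ₜ[R'] f' with hb1
  have hlap : ∀ cs : S, ℓ cs = (cs ⊗ₜ[R] (1 : Mk)) ⊗ₜ[R'] (1 : S') := fun cs => rfl
  have hrap : ∀ y : S', rr y = ((1 : S) ⊗ₜ[R] (1 : Mk)) ⊗ₜ[R'] y := by
    intro y
    rw [hrr]
    show ((1 : S ⊗[R] Mk)) ⊗ₜ[R'] y = _
    rw [Algebra.TensorProduct.one_def]
  have hlb0 : ∀ cs : S, ℓ cs * b0 = (cs ⊗ₜ[R] (1 : Mk)) ⊗ₜ[R'] (1 : S') := by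
    intro cs; rw [hb0, mul_one, hlap]
  have hlb1 : ∀ cs : S, ℓ cs * b1 = (cs ⊗ₜ[R] (1 : Mk)) ⊗ₜ[R'] f' := by
    intro cs
    rw [hb1, hlap, Algebra.TensorProduct.tmul_mul_tmul, Algebra.TensorProduct.tmul_mul_tmul]
    rw [mul_one, mul_one, one_mul]
  -- the left coordinate projections
  have mkF : ∀ (j : Bool), ∃ F : B →+ S, ∀ (x : S) (m : Mk) (y : S'),
      F ((x ⊗ₜ[R] m) ⊗ₜ[R'] y) = (x * ν m) * ρ (if j then (lam' y).2 else (lam' y).1) := by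
    intro j
    set pr : R' × R' → R' := fun cd => if j then cd.2 else cd.1 with hpr
    have hpradd : ∀ u v : R' × R', pr (u + v) = pr u + pr v := by
      intro u v; cases j <;> simp [hpr]
    have hprmul : ∀ (c : R') (u : R' × R'), pr (c * u.1, c * u.2) = c * pr u := by
      intro c u; cases j <;> simp [hpr]
    set F2 : (S ⊗[R] Mk) →+ S' →+ S := AddMonoidHom.mk'
      (fun t => AddMonoidHom.mk' (fun y => μ t * ρ (pr (lam' y))) (by
        intro y z
        show μ t * ρ (pr (lam' (y + z))) = μ t * ρ (pr (lam' y)) + μ t * ρ (pr (lam' z))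
        rw [lam'add, hpradd, map_add]
        ring))
      (by
        intro t1 t2
        ext y
        simp only [AddMonoidHom.mk'_apply, AddMonoidHom.add_apply, map_add]
        ring) with hF2
    refine ⟨TensorProduct.liftAddHom F2 ?_, ?_⟩
    · intro c t y
      simp only [hF2, AddMonoidHom.mk'_apply]
      rw [hμsc, hsmulS' c y, lam'mul, hprmul, map_mul]
      ring
    · intro x m y
      rw [TensorProduct.liftAddHom_tmul]
      simp only [hF2, AddMonoidHom.mk'_apply]
      rw [hμtmul]
  obtain ⟨π0, hπ0⟩ := mkF false
  obtain ⟨π1, hπ1⟩ := mkF true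
  simp only [if_false, if_true, Bool.false_eq_true] at hπ0 hπ1
  -- key values of the projections
  have hπ0l0 : ∀ cs : S, π0 (ℓ cs * b0) = cs := by
    intro cs
    rw [hlb0, hπ0, lam'one]
    simp
  have hπ0l1 : ∀ cs : S, π0 (ℓ cs * b1) = 0 := by
    intro cs
    rw [hlb1, hπ0, lam'f']
    simp
  have hπ1l0 : ∀ cs : S, π1 (ℓ cs * b0) = 0 := by
    intro cs
    rw [hlb0, hπ1, lam'one]
    simp
  have hπ1l1 : ∀ cs : S, π1 (ℓ cs * b1) = cs := by
    intro cs
    rw [hlb1, hπ1, lam'f']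
    simp
  -- left existence
  have hkeyL : ∀ (z : S) (y : S'), (z ⊗ₜ[R] (1 : Mk)) ⊗ₜ[R'] y =
      ℓ (z * ρ (lam' y).1) * b0 + ℓ (z * ρ (lam' y).2) * b1 := by
    intro z y
    rw [hlb0, hlb1]
    have hsm : ∀ (c : R') (z' : S), ((c • (z' ⊗ₜ[R] (1 : Mk))) : S ⊗[R] Mk) =
        (z' * ρ c) ⊗ₜ[R] (1 : Mk) := by
      intro c z'
      rw [hsmulT1, Algebra.TensorProduct.tmul_mul_tmul, one_mul, mul_one]
      -- z' ⊗ ψ c = (z' * ρ c) ⊗ 1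
      have h1 : (algebraMap R' Mk c) = (Φ.symm (algebraMap R' Mk c)) • (1 : Mk) := by
        rw [Algebra.smul_def, mul_one, ← hΦap]
        exact (Φ.apply_symm_apply _).symm
      rw [h1, TensorProduct.tmul_smul, TensorProduct.smul_tmul', hρap]
      rw [Algebra.smul_def, mul_comm]
    calc (z ⊗ₜ[R] (1 : Mk)) ⊗ₜ[R'] y
        = (z ⊗ₜ[R] (1 : Mk)) ⊗ₜ[R'] (algebraMap R' S' (lam' y).1 +
            algebraMap R' S' (lam' y).2 * f') := by rw [← hlam' y]
    _ = (z ⊗ₜ[R] (1 : Mk)) ⊗ₜ[R'] (algebraMap R' S' (lam' y).1) +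
        (z ⊗ₜ[R] (1 : Mk)) ⊗ₜ[R'] (algebraMap R' S' (lam' y).2 * f') := by
          rw [TensorProduct.tmul_add]
    _ = ((z * ρ (lam' y).1) ⊗ₜ[R] (1 : Mk)) ⊗ₜ[R'] (1 : S') +
        ((z * ρ (lam' y).2) ⊗ₜ[R] (1 : Mk)) ⊗ₜ[R'] f' := by
          rw [show (algebraMap R' S' (lam' y).1 : S') = (lam' y).1 • (1 : S') from by
            rw [Algebra.smul_def, mul_one]]
          rw [show (algebraMap R' S' (lam' y).2 * f' : S') = (lam' y).2 • f' from by
            rw [Algebra.smul_def]]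
          rw [TensorProduct.tmul_smul, TensorProduct.smul_tmul', hsm]
          rw [TensorProduct.tmul_smul, TensorProduct.smul_tmul', hsm]
  have hpureL : ∀ (x : S) (m : Mk), (x ⊗ₜ[R] m) = ((x * ν m) ⊗ₜ[R] (1 : Mk)) := by
    intro x m
    have h1 : m = (Φ.symm m) • (1 : Mk) := by
      rw [Algebra.smul_def, mul_one, ← hΦap]
      exact (Φ.apply_symm_apply _).symm
    calc x ⊗ₜ[R] m = x ⊗ₜ[R] ((Φ.symm m) • (1 : Mk)) := by rw [← h1]
    _ = ((Φ.symm m) • x) ⊗ₜ[R] (1 : Mk) := by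
          rw [TensorProduct.tmul_smul, TensorProduct.smul_tmul']
    _ = ((x * ν m)) ⊗ₜ[R] (1 : Mk) := by
          rw [Algebra.smul_def, mul_comm, hνap]
  have hexL : ∀ x : B, ∃ c0 c1 : S, x = ℓ c0 * b0 + ℓ c1 * b1 := by
    intro x
    refine TensorProduct.induction_on x ⟨0, 0, by simp⟩ ?_ ?_
    · intro t y
      refine TensorProduct.induction_on t ⟨0, 0, by simp [TensorProduct.zero_tmul]⟩ ?_ ?_
      · intro xs m
        refine ⟨(xs * ν m) * ρ (lam' y).1, (xs * ν m) * ρ (lam' y).2, ?_⟩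
        rw [show (xs ⊗ₜ[R] m) ⊗ₜ[R'] y = ((xs * ν m) ⊗ₜ[R] (1:Mk)) ⊗ₜ[R'] y from by
          rw [← hpureL]]
        exact hkeyL _ y
      · rintro t1 t2 ⟨c0, c1, h1⟩ ⟨d0, d1, h2⟩
        refine ⟨c0 + d0, c1 + d1, ?_⟩
        rw [TensorProduct.add_tmul, h1, h2, map_add, map_add]
        ring
    · rintro z1 z2 ⟨c0, c1, h1⟩ ⟨d0, d1, h2⟩
      refine ⟨c0 + d0, c1 + d1, ?_⟩
      rw [h1, h2, map_add, map_add]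
      ring
  have freeL : FreeRankVia ℓ 2 := by
    refine ⟨![b0, b1], fun x => ?_⟩
    obtain ⟨c0, c1, hc⟩ := hexL x
    refine ⟨![c0, c1], ?_, ?_⟩
    · simp only [Fin.sum_univ_two, Matrix.cons_val_zero, Matrix.cons_val_one, Matrix.head_cons]
      exact hc
    · intro c' hc'
      simp only [Fin.sum_univ_two, Matrix.cons_val_zero, Matrix.cons_val_one,
        Matrix.head_cons] at hc'
      have h0' : π0 x = c' 0 := by
        rw [hc', map_add, hπ0l0, hπ0l1, add_zero]
      have h1' : π1 x = c' 1 := by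
        rw [hc', map_add, hπ1l0, hπ1l1, zero_add]
      have h0 : π0 x = c0 := by
        rw [hc, map_add, hπ0l0, hπ0l1, add_zero]
      have h1 : π1 x = c1 := by
        rw [hc, map_add, hπ1l0, hπ1l1, zero_add]
      funext j
      fin_cases j
      · exact h0'.symm.trans h0
      · exact h1'.symm.trans h1
  have injL : ∀ s : S, ℓ s = 0 → s = 0 := by
    intro s hs
    have : π0 (ℓ s * b0) = s := hπ0l0 s
    rw [hb0, mul_one, hs, map_zero] at this
    exact this.symm
  -- ===== right side =====
  have mkK : ∀ (j : Bool), ∃ K : (S ⊗[R] Mk) →+ Mk, ∀ (x : S) (m : Mk),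
      K (x ⊗ₜ[R] m) = Φ (if j then (lamS x).2 else (lamS x).1) * m := by
    intro j
    set pr : R × R → R := fun cd => if j then cd.2 else cd.1 with hpr
    have hpradd : ∀ u v : R × R, pr (u + v) = pr u + pr v := by
      intro u v; cases j <;> simp [hpr]
    have hprmul : ∀ (c : R) (u : R × R), pr (c * u.1, c * u.2) = c * pr u := by
      intro c u; cases j <;> simp [hpr]
    set F2 : S →+ Mk →+ Mk := AddMonoidHom.mk'
      (fun x => AddMonoidHom.mk' (fun m => Φ (pr (lamS x)) * m) (by
        intro m1 m2
        show Φ (pr (lamS x)) * (m1 + m2) = Φ (pr (lamS x)) * m1 + Φ (pr (lamS x)) * m2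
        ring))
      (by
        intro x1 x2
        ext m
        show Φ (pr (lamS (x1 + x2))) * m = Φ (pr (lamS x1)) * m + Φ (pr (lamS x2)) * m
        rw [lamSadd, hpradd, map_add]
        ring) with hF2
    refine ⟨TensorProduct.liftAddHom F2 ?_, ?_⟩
    · intro r x m
      show Φ (pr (lamS (r • x))) * m = Φ (pr (lamS x)) * (r • m)
      rw [Algebra.smul_def r x, lamSmul, hprmul, map_mul, Algebra.smul_def r m, ← hΦap]
      ring
    · intro x m
      rw [TensorProduct.liftAddHom_tmul]
      rfl
  obtain ⟨K0, hK0⟩ := mkK false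
  obtain ⟨K1, hK1⟩ := mkK true
  simp only [if_false, if_true, Bool.false_eq_true] at hK0 hK1
  have hsemK : ∀ (K : (S ⊗[R] Mk) →+ Mk) (g : S → R),
      (∀ (x : S) (m : Mk), K (x ⊗ₜ[R] m) = Φ (g x) * m) →
      ∀ (c : R') (t : S ⊗[R] Mk), K (c • t) = algebraMap R' Mk c * K t := by
    intro K g hKt c t
    refine TensorProduct.induction_on t ?_ ?_ ?_
    · rw [smul_zero, map_zero, mul_zero]
    · intro x m
      have h1 : c • (x ⊗ₜ[R] m) = x ⊗ₜ[R] (algebraMap R' Mk c * m) := by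
        rw [hsmulT1, Algebra.TensorProduct.tmul_mul_tmul, one_mul]
      rw [h1, hKt, hKt]
      ring
    · intro t1 t2 ih1 ih2
      rw [smul_add, map_add, map_add, mul_add, ih1, ih2]
  have hK0sem := hsemK K0 (fun x => (lamS x).1) hK0
  have hK1sem := hsemK K1 (fun x => (lamS x).2) hK1
  -- right projections B →+ S'
  have mkP : ∀ (K : (S ⊗[R] Mk) →+ Mk),
      (∀ (c : R') (t : S ⊗[R] Mk), K (c • t) = algebraMap R' Mk c * K t) →
      ∃ P : B →+ S', ∀ (t : S ⊗[R] Mk) (y : S'),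
        P (t ⊗ₜ[R'] y) = algebraMap R' S' (Ψ.symm (K t)) * y := by
    intro K hsem
    set G : (S ⊗[R] Mk) →+ S' →+ S' := AddMonoidHom.mk'
      (fun t => AddMonoidHom.mk' (fun y => algebraMap R' S' (Ψ.symm (K t)) * y) (by
        intro y1 y2
        show algebraMap R' S' (Ψ.symm (K t)) * (y1 + y2) = _ * y1 + _ * y2
        ring))
      (by
        intro t1 t2
        ext y
        show algebraMap R' S' (Ψ.symm (K (t1 + t2))) * y =
          algebraMap R' S' (Ψ.symm (K t1)) * y + algebraMap R' S' (Ψ.symm (K t2)) * y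
        rw [map_add, map_add, map_add]
        ring) with hG
    refine ⟨TensorProduct.liftAddHom G ?_, ?_⟩
    · intro c t y
      show algebraMap R' S' (Ψ.symm (K (c • t))) * y =
        algebraMap R' S' (Ψ.symm (K t)) * (c • y)
      rw [hsem, map_mul, hΨsm, map_mul, hsmulS']
      ring
    · intro t y
      rw [TensorProduct.liftAddHom_tmul]
      rfl
  obtain ⟨P0, hP0⟩ := mkP K0 hK0sem
  obtain ⟨P1, hP1⟩ := mkP K1 hK1sem
  -- right basis
  set c0' : B := 1 with hc0'
  set c1' : B := (f ⊗ₜ[R] (1 : Mk)) ⊗ₜ[R'] (1 : S') with hc1'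
  have hrb0 : ∀ y : S', rr y * c0' = ((1 : S) ⊗ₜ[R] (1 : Mk)) ⊗ₜ[R'] y := by
    intro y; rw [hc0', mul_one, hrap]
  have hrb1 : ∀ y : S', rr y * c1' = (f ⊗ₜ[R] (1 : Mk)) ⊗ₜ[R'] y := by
    intro y
    rw [hc1', hrap, Algebra.TensorProduct.tmul_mul_tmul, Algebra.TensorProduct.tmul_mul_tmul]
    rw [one_mul, one_mul, mul_one]
  -- projection values
  have hP0r0 : ∀ y : S', P0 (rr y * c0') = y := by
    intro y
    rw [hrb0, hP0, hK0, lamSone]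
    simp
  have hP0r1 : ∀ y : S', P0 (rr y * c1') = 0 := by
    intro y
    rw [hrb1, hP0, hK0, lamSf]
    simp
  have hP1r0 : ∀ y : S', P1 (rr y * c0') = 0 := by
    intro y
    rw [hrb0, hP1, hK1, lamSone]
    simp
  have hP1r1 : ∀ y : S', P1 (rr y * c1') = y := by
    intro y
    rw [hrb1, hP1, hK1, lamSf]
    simp
  -- right existence
  have hsmT1' : ∀ (c : R') (x : S), c • (x ⊗ₜ[R] (1 : Mk)) = x ⊗ₜ[R] (algebraMap R' Mk c) := by
    intro c x
    rw [hsmulT1, Algebra.TensorProduct.tmul_mul_tmul, one_mul, mul_one]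
  have hmm : ∀ m : Mk, algebraMap R' Mk (Ψ.symm m) = m := by
    intro m
    rw [← hΨap]
    exact Ψ.apply_symm_apply m
  have hkeyR1 : ∀ (m : Mk) (y : S'), ((1 : S) ⊗ₜ[R] m) ⊗ₜ[R'] y =
      rr (algebraMap R' S' (Ψ.symm m) * y) * c0' := by
    intro m y
    rw [hrb0]
    calc ((1 : S) ⊗ₜ[R] m) ⊗ₜ[R'] y
        = ((Ψ.symm m) • ((1 : S) ⊗ₜ[R] (1 : Mk))) ⊗ₜ[R'] y := by rw [hsmT1', hmm]
    _ = ((1 : S) ⊗ₜ[R] (1 : Mk)) ⊗ₜ[R'] ((Ψ.symm m) • y) := by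
          rw [TensorProduct.smul_tmul]
    _ = _ := by rw [hsmulS']
  have hkeyR2 : ∀ (m : Mk) (y : S'), (f ⊗ₜ[R] m) ⊗ₜ[R'] y =
      rr (algebraMap R' S' (Ψ.symm m) * y) * c1' := by
    intro m y
    rw [hrb1]
    calc (f ⊗ₜ[R] m) ⊗ₜ[R'] y
        = ((Ψ.symm m) • (f ⊗ₜ[R] (1 : Mk))) ⊗ₜ[R'] y := by rw [hsmT1', hmm]
    _ = (f ⊗ₜ[R] (1 : Mk)) ⊗ₜ[R'] ((Ψ.symm m) • y) := by
          rw [TensorProduct.smul_tmul]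
    _ = _ := by rw [hsmulS']
  have hsplitS : ∀ (x : S) (m : Mk), x ⊗ₜ[R] m =
      (1 : S) ⊗ₜ[R] (Φ (lamS x).1 * m) + f ⊗ₜ[R] (Φ (lamS x).2 * m) := by
    intro x m
    calc x ⊗ₜ[R] m = (algebraMap R S (lamS x).1 + algebraMap R S (lamS x).2 * f) ⊗ₜ[R] m := by
          rw [← hlamS x]
    _ = (algebraMap R S (lamS x).1) ⊗ₜ[R] m + (algebraMap R S (lamS x).2 * f) ⊗ₜ[R] m := by
          rw [TensorProduct.add_tmul]
    _ = _ := by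
          congr 1
          · rw [show (algebraMap R S (lamS x).1 : S) = (lamS x).1 • (1 : S) from by
              rw [Algebra.smul_def, mul_one]]
            rw [TensorProduct.smul_tmul, Algebra.smul_def, ← hΦap]
          · rw [show (algebraMap R S (lamS x).2 * f : S) = (lamS x).2 • f from by
              rw [Algebra.smul_def]]
            rw [TensorProduct.smul_tmul, Algebra.smul_def, ← hΦap]
  have hexR : ∀ x : B, ∃ d0 d1 : S', x = rr d0 * c0' + rr d1 * c1' := by
    intro x
    refine TensorProduct.induction_on x ⟨0, 0, by simp⟩ ?_ ?_
    · intro t y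
      refine TensorProduct.induction_on t ⟨0, 0, by simp [TensorProduct.zero_tmul]⟩ ?_ ?_
      · intro xs m
        refine ⟨algebraMap R' S' (Ψ.symm (Φ (lamS xs).1 * m)) * y,
                algebraMap R' S' (Ψ.symm (Φ (lamS xs).2 * m)) * y, ?_⟩
        rw [show (xs ⊗ₜ[R] m) ⊗ₜ[R'] y =
            ((1 : S) ⊗ₜ[R] (Φ (lamS xs).1 * m)) ⊗ₜ[R'] y +
            (f ⊗ₜ[R] (Φ (lamS xs).2 * m)) ⊗ₜ[R'] y from by
          rw [← TensorProduct.add_tmul, ← hsplitS]]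
        rw [hkeyR1, hkeyR2]
      · rintro t1 t2 ⟨d0, d1, h1⟩ ⟨e0, e1, h2⟩
        refine ⟨d0 + e0, d1 + e1, ?_⟩
        rw [TensorProduct.add_tmul, h1, h2, map_add, map_add]
        ring
    · rintro z1 z2 ⟨d0, d1, h1⟩ ⟨e0, e1, h2⟩
      refine ⟨d0 + e0, d1 + e1, ?_⟩
      rw [h1, h2, map_add, map_add]
      ring
  have freeR : FreeRankVia rr 2 := by
    refine ⟨![c0', c1'], fun x => ?_⟩
    obtain ⟨d0, d1, hd⟩ := hexR x
    refine ⟨![d0, d1], ?_, ?_⟩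
    · simp only [Fin.sum_univ_two, Matrix.cons_val_zero, Matrix.cons_val_one, Matrix.head_cons]
      exact hd
    · intro c' hc'
      simp only [Fin.sum_univ_two, Matrix.cons_val_zero, Matrix.cons_val_one,
        Matrix.head_cons] at hc'
      have h0' : P0 x = c' 0 := by
        rw [hc', map_add, hP0r0, hP0r1, add_zero]
      have h1' : P1 x = c' 1 := by
        rw [hc', map_add, hP1r0, hP1r1, zero_add]
      have h0 : P0 x = d0 := by
        rw [hd, map_add, hP0r0, hP0r1, add_zero]
      have h1 : P1 x = d1 := by
        rw [hd, map_add, hP1r0, hP1r1, zero_add]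
      funext j
      fin_cases j
      · exact h0'.symm.trans h0
      · exact h1'.symm.trans h1
  have injR : ∀ y : S', rr y = 0 → y = 0 := by
    intro y hy
    have : P0 (rr y * c0') = y := hP0r0 y
    rw [hc0', mul_one, hy, map_zero] at this
    exact this.symm
  exact ⟨freeL, freeR, injL, injR⟩

end Abstract

open Fin.NatCast


/-- (0-indexed, `i + 1 < n`.)  The bimodule
`B_{i,i+1} := O(V_i) ⊗_{O(V_i)^{s_i}} O(V_i ∩ V_{i+1}) ⊗_{O(V_{i+1})^{s_{i+1}}} O(V_{i+1})`
is free of rank 2 as a left `O(V_i)`-module and free of rank 2 as a right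
`O(V_{i+1})`-module; as an `(O(Z), O(Z))`-bimodule its left annihilator is the kernel of
`O(Z) → O(V_i)` and its right annihilator is the kernel of `O(Z) → O(V_{i+1})`. -/
theorem Bi_adjacent_free_and_annihilators (i : ℕ) (hi : i + 1 < n) :
    letI M := O k n (Vi k n i ∩ Vi k n (i + 1))
    letI : Algebra (fixedO k n i) M :=
      ((res k n (Set.inter_subset_left : Vi k n i ∩ Vi k n (i + 1) ⊆ Vi k n i)).comp
        (fixedO k n i).subtype).toAlgebra
    letI : Algebra (fixedO k n (i + 1)) M :=
      ((res k n (Set.inter_subset_right :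
          Vi k n i ∩ Vi k n (i + 1) ⊆ Vi k n (i + 1))).comp
        (fixedO k n (i + 1)).subtype).toAlgebra
    letI T1 := O k n (Vi k n i) ⊗[fixedO k n i] M
    letI : Algebra (fixedO k n (i + 1)) T1 :=
      ((Algebra.TensorProduct.includeRight.toRingHom :
          M →+* T1).comp (algebraMap (fixedO k n (i + 1)) M)).toAlgebra
    letI B := T1 ⊗[fixedO k n (i + 1)] O k n (Vi k n (i + 1))
    letI ℓ : O k n (Vi k n i) →+* B :=
      (Algebra.TensorProduct.includeLeftRingHom : T1 →+* B).comp
        (Algebra.TensorProduct.includeLeftRingHom : O k n (Vi k n i) →+* T1)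
    letI r : O k n (Vi k n (i + 1)) →+* B :=
      Algebra.TensorProduct.includeRight.toRingHom
    FreeRankVia ℓ 2 ∧ FreeRankVia r 2 ∧
    {a : O k n (ZZ k n) | ∀ x : B, ℓ (res k n (Vi_subset_ZZ k n i) a) * x = 0} =
      {a : O k n (ZZ k n) | res k n (Vi_subset_ZZ k n i) a = 0} ∧
    {a : O k n (ZZ k n) | ∀ x : B, r (res k n (Vi_subset_ZZ k n (i + 1)) a) * x = 0} =
      {a : O k n (ZZ k n) | res k n (Vi_subset_ZZ k n (i + 1)) a = 0} := by
  classical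
  have hin : i < n + 1 := by omega
  have hi1 : i + 1 < n + 1 := by omega
  have hi2 : i + 1 + 1 < n + 1 := by omega
  have hab : ((i : ℕ) : Fin (n+1)) ≠ ((i+1 : ℕ) : Fin (n+1)) := by
    intro h
    have := congrArg Fin.val h
    rw [Fin.val_cast_of_lt hin, Fin.val_cast_of_lt hi1] at this
    omega
  have hbc : ((i+1 : ℕ) : Fin (n+1)) ≠ ((i+1+1 : ℕ) : Fin (n+1)) := by
    intro h
    have := congrArg Fin.val h
    rw [Fin.val_cast_of_lt hi1, Fin.val_cast_of_lt hi2] at this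
    omega
  have hac : ((i : ℕ) : Fin (n+1)) ≠ ((i+1+1 : ℕ) : Fin (n+1)) := by
    intro h
    have := congrArg Fin.val h
    rw [Fin.val_cast_of_lt hin, Fin.val_cast_of_lt hi2] at this
    omega
  letI M := O k n (Vi k n i ∩ Vi k n (i + 1))
  letI iRM : Algebra (fixedO k n i) M :=
    ((res k n (Set.inter_subset_left : Vi k n i ∩ Vi k n (i + 1) ⊆ Vi k n i)).comp
      (fixedO k n i).subtype).toAlgebra
  letI iR'M : Algebra (fixedO k n (i + 1)) M :=
    ((res k n (Set.inter_subset_right :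
        Vi k n i ∩ Vi k n (i + 1) ⊆ Vi k n (i + 1))).comp
      (fixedO k n (i + 1)).subtype).toAlgebra
  have hphi : Function.Bijective (algebraMap (fixedO k n i) M) :=
    resFixed_bij hab hbc hac (t := simple n i) rfl
      (Y := Vi k n i ∩ Vi k n (i + 1)) rfl Set.inter_subset_left
  have hYr : Vi k n i ∩ Vi k n (i + 1) =
      Vt k n (simple n (i + 1)) ∩ Vt k n (Equiv.swap ((i+1 : ℕ) : Fin (n+1)) ((i : ℕ) : Fin (n+1))) := by
    rw [Set.inter_comm, Equiv.swap_comm ((i+1 : ℕ) : Fin (n+1)) ((i : ℕ) : Fin (n+1))]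
    rfl
  have hpsi : Function.Bijective (algebraMap (fixedO k n (i + 1)) M) :=
    resFixed_bij hbc.symm hab.symm hac.symm (t := simple n (i + 1))
      (Equiv.swap_comm ((i+1 : ℕ) : Fin (n+1)) ((i+1+1 : ℕ) : Fin (n+1)))
      (Y := Vi k n i ∩ Vi k n (i + 1)) hYr Set.inter_subset_right
  have hSf : ∀ x : O k n (Vi k n i), ∃! cd : (fixedO k n i) × (fixedO k n i),
      x = algebraMap (fixedO k n i) (O k n (Vi k n i)) cd.1 +
        algebraMap (fixedO k n i) (O k n (Vi k n i)) cd.2 *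
        fdiff (Vi k n i) ((i : ℕ) : Fin (n+1)) ((i+1 : ℕ) : Fin (n+1)) :=
    fun x => freeBasis_gen hab (t := simple n i) rfl x
  have hS'f : ∀ x : O k n (Vi k n (i + 1)),
      ∃! cd : (fixedO k n (i + 1)) × (fixedO k n (i + 1)),
      x = algebraMap (fixedO k n (i + 1)) (O k n (Vi k n (i + 1))) cd.1 +
        algebraMap (fixedO k n (i + 1)) (O k n (Vi k n (i + 1))) cd.2 *
        fdiff (Vi k n (i + 1)) ((i+1+1 : ℕ) : Fin (n+1)) ((i+1 : ℕ) : Fin (n+1)) :=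
    fun x => freeBasis_gen hbc.symm (t := simple n (i + 1))
      (Equiv.swap_comm ((i+1 : ℕ) : Fin (n+1)) ((i+1+1 : ℕ) : Fin (n+1))) x
  have key := tensorFree (R := (fixedO k n i)) (S := O k n (Vi k n i)) (Mk := M)
    (R' := (fixedO k n (i + 1))) (S' := O k n (Vi k n (i + 1)))
    hphi hpsi _ hSf _ hS'f
  obtain ⟨h1, h2, h3, h4⟩ := key
  refine ⟨h1, h2, ?_, ?_⟩
  · ext u
    simp only [Set.mem_setOf_eq]
    constructor
    · intro hu
      have := hu 1
      rw [mul_one] at this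
      exact h3 _ this
    · intro hu x
      rw [hu, map_zero, zero_mul]
  · ext u
    simp only [Set.mem_setOf_eq]
    constructor
    · intro hu
      have := hu 1
      rw [mul_one] at this
      exact h4 _ this
    · intro hu x
      rw [hu, map_zero, zero_mul]

end TLpaper
end

section
/- Let i, j ∈ {1,…,n} with |i − j| > 1, and set M := O(V_i ∩ V_j) ⊗_{O(V_j)^{s_j}} O(V_j), a right O(V_j)-module via the second factor. Then every f ∈ O(V_j) whose restriction to V_i ∩ V_j is zero acts as zero on M; consequently the right O(V_j)-action on M factors through the restriction O(V_j) → O(V_i ∩ V_j), and M is free as a right O(V_i ∩ V_j)-module. -/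
/-! Basic setup: type A_n geometric representation, Weyl lines, combinatorics. -/

set_option linter.unusedSectionVars false
set_option synthInstance.maxHeartbeats 1000000
set_option maxHeartbeats 1000000

namespace TLpaper

variable (k : Type) [Field k] [CharZero k] (n : ℕ)

open scoped TensorProduct

/-- `S` is a free module over `R`, the action being through the ring homomorphism
`f : R →+* S` (i.e. `r • x := f r * x`): there is a basis. -/
def FreeVia {R S : Type} [CommRing R] [CommRing S] (f : R →+* S) : Prop :=
  ∃ (ι : Type) (b : ι → S), ∀ x : S, ∃! c : ι →₀ R, x = c.sum fun j r => f r * b j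

noncomputable section Aux
open Fin.NatCast
section Geo
open Equiv

variable {k n}

theorem hyp_comp {x : Fin (n+1) → k} (σ t : Equiv.Perm (Fin (n+1))) :
    x ∘ ⇑σ ∈ Hyp k n t ↔ x ∈ Hyp k n (σ * t * σ⁻¹) := by
  unfold Hyp
  simp only [Set.mem_setOf_eq, Function.comp_apply, Equiv.Perm.coe_mul]
  constructor
  · rintro ⟨h1, h2⟩
    refine ⟨by rw [← Equiv.sum_comp σ x]; exact h1, fun m => ?_⟩
    have := h2 (σ⁻¹ m)
    simpa using this
  · rintro ⟨h1, h2⟩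
    refine ⟨by rw [← Equiv.sum_comp σ x] at h1; exact h1, fun m => ?_⟩
    have := h2 (σ m)
    simpa using this

theorem isWeylLine_comp_s12 {L : Set (Fin (n+1) → k)} (σ : Equiv.Perm (Fin (n+1)))
    (h : IsWeylLine k n L) : IsWeylLine k n {y | y ∘ ⇑σ⁻¹ ∈ L} := by
  obtain ⟨⟨v, hv0, hvr⟩, T, hT, hTL⟩ := h
  constructor
  · refine ⟨v ∘ ⇑σ, ?_, ?_⟩
    · intro h0
      apply hv0
      funext m
      have := congrFun h0 (σ⁻¹ m)
      simpa using this
    · ext y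
      simp only [Set.mem_setOf_eq, hvr, Set.mem_range]
      constructor
      · rintro ⟨c, hc⟩
        refine ⟨c, ?_⟩
        funext m
        have := congrFun hc (σ m)
        simpa using this
      · rintro ⟨c, hc⟩
        refine ⟨c, ?_⟩
        funext m
        have := congrFun hc (σ⁻¹ m)
        simpa using this
  · refine ⟨(fun t => σ⁻¹ * t * σ⁻¹⁻¹) '' T, ?_, ?_⟩
    · rintro t' ⟨t, htT, rfl⟩
      obtain ⟨a, b, hab, rfl⟩ := hT t htT
      exact ⟨σ⁻¹ a, σ⁻¹ b, fun h => hab (σ⁻¹.injective h),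
        (Equiv.swap_apply_apply σ⁻¹ a b).symm⟩
    · ext y
      simp only [Set.mem_setOf_eq, hTL, Set.mem_inter_iff, Set.biInter_image, Set.mem_iInter]
      constructor
      · rintro ⟨h1, h2⟩
        refine ⟨by rw [← Equiv.sum_comp σ⁻¹ y]; exact h1, fun t ht => ?_⟩
        exact (hyp_comp σ⁻¹ t).mp (h2 t ht)
      · rintro ⟨h1, h2⟩
        refine ⟨by rw [← Equiv.sum_comp σ⁻¹ y] at h1; exact h1, fun t ht => ?_⟩
        exact (hyp_comp σ⁻¹ t).mpr (h2 t ht)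

theorem mem_Vt_comp {t σ : Equiv.Perm (Fin (n+1))} (hconj : σ * t * σ⁻¹ = t)
    {x : Fin (n+1) → k} (hx : x ∈ Vt k n t) : x ∘ ⇑σ ∈ Vt k n t := by
  simp only [Vt, Set.mem_iUnion, Set.mem_setOf_eq, exists_prop] at hx ⊢
  obtain ⟨L, ⟨hL, hns⟩, hxL⟩ := hx
  refine ⟨{y | y ∘ ⇑σ⁻¹ ∈ L}, ⟨isWeylLine_comp_s12 σ hL, ?_⟩, ?_⟩
  · intro hsub
    apply hns
    intro z hz
    have hz' : z ∘ ⇑σ ∈ {y | y ∘ ⇑σ⁻¹ ∈ L} := by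
      simp only [Set.mem_setOf_eq]
      have : (z ∘ ⇑σ) ∘ ⇑σ⁻¹ = z := by funext m; simp
      rwa [this]
    have := hsub hz'
    rw [hyp_comp σ t, hconj] at this
    exact this
  · simp only [Set.mem_setOf_eq]
    have : (x ∘ ⇑σ) ∘ ⇑σ⁻¹ = x := by funext m; simp
    rwa [this]

theorem ne_of_mem_Vt {a b : Fin (n+1)} {x : Fin (n+1) → k}
    (hx : x ∈ Vt k n (Equiv.swap a b)) (hx0 : x ≠ 0) : x a ≠ x b := by
  simp only [Vt, Set.mem_iUnion, Set.mem_setOf_eq, exists_prop] at hx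
  obtain ⟨L, ⟨⟨⟨v, hv0, hvr⟩, T, hT, hTL⟩, hns⟩, hxL⟩ := hx
  rw [Set.not_subset] at hns
  obtain ⟨z, hzL, hz⟩ := hns
  have hzsum : (∑ m, z m) = 0 := by
    have := hTL ▸ hzL
    exact this.1
  have hzab : z a ≠ z b := by
    by_contra hzab
    apply hz
    refine ⟨hzsum, fun m => ?_⟩
    rcases eq_or_ne m a with rfl | hma
    · rw [Equiv.swap_apply_left]; exact hzab.symm
    rcases eq_or_ne m b with rfl | hmb
    · rw [Equiv.swap_apply_right]; exact hzab
    · rw [Equiv.swap_apply_of_ne_of_ne hma hmb]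
  obtain ⟨c1, hc1⟩ := hvr ▸ hzL
  obtain ⟨c0, hc0⟩ := hvr ▸ hxL
  have hvab : v a ≠ v b := by
    intro hv
    apply hzab
    rw [← hc1]; simp [hv]
  have hc00 : c0 ≠ 0 := by
    rintro rfl
    apply hx0
    rw [← hc0]; simp
  intro hxab
  apply hvab
  rw [← hc0] at hxab
  simp only [Pi.smul_apply, smul_eq_mul] at hxab
  exact mul_left_cancel₀ hc00 hxab

theorem smul_mem_Vt {t : Equiv.Perm (Fin (n+1))} {x : Fin (n+1) → k}
    (hx : x ∈ Vt k n t) (c : k) : c • x ∈ Vt k n t := by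
  simp only [Vt, Set.mem_iUnion, Set.mem_setOf_eq, exists_prop] at hx ⊢
  obtain ⟨L, hL, hxL⟩ := hx
  refine ⟨L, hL, ?_⟩
  obtain ⟨⟨v, hv0, hvr⟩, _⟩ := hL.1
  obtain ⟨c0, hc0⟩ := hvr ▸ hxL
  rw [hvr]
  exact ⟨c * c0, by rw [← hc0, smul_smul]⟩

end Geo
section Line
open Equiv

variable {k n}

theorem fin_cast_ne {a b : ℕ} (ha : a < n+1) (hb : b < n+1) (hab : a ≠ b) :
    (a : Fin (n+1)) ≠ (b : Fin (n+1)) := by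
  intro h
  apply hab
  have := congrArg Fin.val h
  rwa [Fin.val_cast_of_lt ha, Fin.val_cast_of_lt hb] at this

theorem sum_ite_pair (a b : Fin (n+1)) (hab : a ≠ b) (hn : 1 ≤ n) (s u : k)
    (h : 2*s + ((n:k)-1)*u = 0) :
    ∑ m : Fin (n+1), (if m = a ∨ m = b then s else u) = 0 := by
  classical
  rw [Finset.sum_ite]
  rw [Finset.sum_const, Finset.sum_const]
  have h1 : Finset.univ.filter (fun m : Fin (n+1) => m = a ∨ m = b) = {a, b} := by
    ext m; simp [Finset.mem_insert]
  have h2 : Finset.univ.filter (fun m : Fin (n+1) => ¬(m = a ∨ m = b)) = ({a, b} : Finset (Fin (n+1)))ᶜ := by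
    ext m; simp [Finset.mem_insert]
  rw [h1, h2]
  have hcard1 : ({a, b} : Finset (Fin (n+1))).card = 2 := by
    rw [Finset.card_insert_of_notMem (by simp [hab]), Finset.card_singleton]
  have hcard2 : (({a, b} : Finset (Fin (n+1)))ᶜ).card = n - 1 := by
    rw [Finset.card_compl, hcard1]
    simp [Fintype.card_fin]
  rw [hcard1, hcard2]
  have : ((n - 1 : ℕ) : k) = (n : k) - 1 := by
    rw [Nat.cast_sub hn, Nat.cast_one]
  rw [nsmul_eq_mul, nsmul_eq_mul, this]
  push_cast
  linear_combination h

/-- The special vector spanning a Weyl line inside `V_i ∩ V_j`. -/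
def vsp (k : Type) [Field k] (n i j : ℕ) : Fin (n+1) → k :=
  fun m => if m = (i : Fin (n+1)) ∨ m = (j : Fin (n+1)) then (n : k) - 1 else -2

section Spec

theorem vsp_spec (i j : ℕ) (hi : i < n) (hj : j < n) (hdist : i + 1 < j ∨ j + 1 < i) :
    (∀ c : k, c • vsp k n i j ∈ Vi k n i ∩ Vi k n j) ∧
      vsp k n i j ((j : ℕ) : Fin (n+1)) ≠ vsp k n i j ((j+1 : ℕ) : Fin (n+1)) := by
  classical
  have hn : 3 ≤ n := by omega
  have hij : i ≠ j := by omega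
  -- distinctness of the four indices as elements of Fin (n+1)
  have hIJ : ((i:ℕ) : Fin (n+1)) ≠ ((j:ℕ) : Fin (n+1)) := fin_cast_ne (by omega) (by omega) hij
  have hI1 : ((i:ℕ) : Fin (n+1)) ≠ ((i+1:ℕ) : Fin (n+1)) := fin_cast_ne (by omega) (by omega) (by omega)
  have hJ1 : ((j:ℕ) : Fin (n+1)) ≠ ((j+1:ℕ) : Fin (n+1)) := fin_cast_ne (by omega) (by omega) (by omega)
  have hI1J : ((i+1:ℕ) : Fin (n+1)) ≠ ((j:ℕ) : Fin (n+1)) := fin_cast_ne (by omega) (by omega) (by omega)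
  have hI1I : ((i+1:ℕ) : Fin (n+1)) ≠ ((i:ℕ) : Fin (n+1)) := hI1.symm
  have hJ1I : ((j+1:ℕ) : Fin (n+1)) ≠ ((i:ℕ) : Fin (n+1)) := fin_cast_ne (by omega) (by omega) (by omega)
  have hJ1J : ((j+1:ℕ) : Fin (n+1)) ≠ ((j:ℕ) : Fin (n+1)) := hJ1.symm
  have hab : ((n : k) - 1) ≠ -2 := by
    intro h
    have : ((n : k) + 1) = 0 := by linear_combination h
    have h2 : ((n+1 : ℕ) : k) = 0 := by push_cast; linear_combination this
    exact (Nat.cast_ne_zero (R := k)).mpr (by omega) h2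
  -- values of vsp
  have hvi : vsp k n i j ((i:ℕ) : Fin (n+1)) = (n:k) - 1 := by simp [vsp]
  have hvj : vsp k n i j ((j:ℕ) : Fin (n+1)) = (n:k) - 1 := by simp [vsp]
  have hvi1 : vsp k n i j ((i+1:ℕ) : Fin (n+1)) = -2 := by
    unfold vsp
    rw [if_neg (by push_neg; exact ⟨hI1I, hI1J⟩)]
  have hvj1 : vsp k n i j ((j+1:ℕ) : Fin (n+1)) = -2 := by
    unfold vsp
    rw [if_neg (by push_neg; exact ⟨hJ1I, hJ1J⟩)]
  have hvne : vsp k n i j ≠ 0 := by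
    intro h
    have := congrFun h ((i+1:ℕ) : Fin (n+1))
    rw [hvi1] at this
    norm_num at this
  -- the line is a Weyl line
  have hline : IsWeylLine k n (Set.range fun c : k => c • vsp k n i j) := by
    constructor
    · exact ⟨vsp k n i j, hvne, rfl⟩
    · refine ⟨{t | IsTransposition t ∧ ∀ m, vsp k n i j (t m) = vsp k n i j m}, fun t ht => ht.1, ?_⟩
      ext x
      constructor
      · rintro ⟨c, rfl⟩
        refine ⟨?_, ?_⟩
        · show (∑ m, c * vsp k n i j m) = 0
          rw [← Finset.mul_sum]
          have : (∑ m, vsp k n i j m) = 0 := by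
            unfold vsp
            exact sum_ite_pair _ _ hIJ (by omega) _ _ (by push_cast; ring)
          rw [this, mul_zero]
        · refine Set.mem_iInter₂.2 fun t ht => ⟨?_, fun m => ?_⟩
          · show (∑ m, c * vsp k n i j m) = 0
            rw [← Finset.mul_sum]
            have : (∑ m, vsp k n i j m) = 0 := by
              unfold vsp
              exact sum_ite_pair _ _ hIJ (by omega) _ _ (by push_cast; ring)
            rw [this, mul_zero]
          · show c * vsp k n i j (t m) = c * vsp k n i j m
            rw [ht.2 m]
      · rintro ⟨hsum, hint⟩
        -- x is constant on {i,j} and on the complement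
        have hswap : ∀ a b : Fin (n+1), a ≠ b → vsp k n i j a = vsp k n i j b → x a = x b := by
          intro a b hne hv
          have hmem : Equiv.swap a b ∈ {t | IsTransposition t ∧ ∀ m, vsp k n i j (t m) = vsp k n i j m} := by
            refine ⟨⟨a, b, hne, rfl⟩, fun m => ?_⟩
            rcases eq_or_ne m a with rfl | hma
            · rw [Equiv.swap_apply_left, hv]
            rcases eq_or_ne m b with rfl | hmb
            · rw [Equiv.swap_apply_right, hv]
            · rw [Equiv.swap_apply_of_ne_of_ne hma hmb]
          have hx : x ∈ Hyp k n (Equiv.swap a b) := Set.mem_iInter₂.1 hint _ hmem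
          have := hx.2 b
          rwa [Equiv.swap_apply_right] at this
        set s : k := x ((i:ℕ) : Fin (n+1)) with hs
        set u : k := x ((i+1:ℕ) : Fin (n+1)) with hu
        have hxform : ∀ m : Fin (n+1), x m = if m = ((i:ℕ) : Fin (n+1)) ∨ m = ((j:ℕ) : Fin (n+1)) then s else u := by
          intro m
          by_cases hm : m = ((i:ℕ) : Fin (n+1)) ∨ m = ((j:ℕ) : Fin (n+1))
          · rw [if_pos hm]
            rcases hm with rfl | rfl
            · rfl
            · rw [hs]
              exact hswap _ _ (Ne.symm hIJ) (by rw [hvi, hvj])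
          · rw [if_neg hm]
            push_neg at hm
            rcases eq_or_ne m ((i+1:ℕ) : Fin (n+1)) with rfl | hm1
            · rfl
            · refine hswap _ _ hm1 ?_
              have h1 : vsp k n i j m = -2 := by
                unfold vsp
                rw [if_neg (by tauto)]
              rw [h1, hvi1]
        have hsumval : 2*s + ((n:k)-1)*u = 0 := by
          have : (∑ m, x m) = 2*s + ((n:k)-1)*u := by
            calc (∑ m, x m) = ∑ m : Fin (n+1), (if m = ((i:ℕ) : Fin (n+1)) ∨ m = ((j:ℕ) : Fin (n+1)) then s else u) := Finset.sum_congr rfl (fun m _ => hxform m)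
            _ = 2*s + ((n:k)-1)*u := by
                classical
                rw [Finset.sum_ite, Finset.sum_const, Finset.sum_const]
                have h1 : Finset.univ.filter (fun m : Fin (n+1) => m = ((i:ℕ) : Fin (n+1)) ∨ m = ((j:ℕ) : Fin (n+1))) = {((i:ℕ) : Fin (n+1)), ((j:ℕ) : Fin (n+1))} := by
                  ext m; simp [Finset.mem_insert]
                have h2 : Finset.univ.filter (fun m : Fin (n+1) => ¬(m = ((i:ℕ) : Fin (n+1)) ∨ m = ((j:ℕ) : Fin (n+1)))) = ({((i:ℕ) : Fin (n+1)), ((j:ℕ) : Fin (n+1))} : Finset (Fin (n+1)))ᶜ := by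
                  ext m; simp [Finset.mem_insert]
                rw [h1, h2, Finset.card_insert_of_notMem (by simp [hIJ]), Finset.card_singleton,
                  Finset.card_compl]
                simp only [Fintype.card_fin]
                have hc : ({((i:ℕ) : Fin (n+1)), ((j:ℕ) : Fin (n+1))} : Finset (Fin (n+1))).card = 2 := by
                  rw [Finset.card_insert_of_notMem (by simp [hIJ]), Finset.card_singleton]
                rw [hc]
                rw [nsmul_eq_mul, nsmul_eq_mul]
                have : ((n + 1 - 2 : ℕ) : k) = (n : k) - 1 := by
                  rw [show n + 1 - 2 = n - 1 by omega, Nat.cast_sub (by omega), Nat.cast_one]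
                rw [this]
                ring
          rw [← this, hsum]
        refine ⟨-u/2, ?_⟩
        funext m
        rw [hxform m]
        show (-u/2) * vsp k n i j m = _
        unfold vsp
        by_cases hm : m = ((i:ℕ) : Fin (n+1)) ∨ m = ((j:ℕ) : Fin (n+1))
        · rw [if_pos hm, if_pos hm]
          field_simp
          linear_combination -hsumval
        · rw [if_neg hm, if_neg hm]
          ring
  -- conclusion
  constructor
  · intro c
    constructor
    · simp only [Vi, Vt, Set.mem_iUnion, Set.mem_setOf_eq, exists_prop]
      refine ⟨Set.range fun c : k => c • vsp k n i j, ⟨hline, ?_⟩, ⟨c, rfl⟩⟩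
      intro hsub
      have hv : vsp k n i j ∈ Set.range fun c : k => c • vsp k n i j := ⟨1, one_smul _ _⟩
      have := (hsub hv).2 ((i:ℕ) : Fin (n+1))
      rw [simple, Equiv.swap_apply_left] at this
      rw [hvi1, hvi] at this
      exact hab this.symm
    · simp only [Vi, Vt, Set.mem_iUnion, Set.mem_setOf_eq, exists_prop]
      refine ⟨Set.range fun c : k => c • vsp k n i j, ⟨hline, ?_⟩, ⟨c, rfl⟩⟩
      intro hsub
      have hv : vsp k n i j ∈ Set.range fun c : k => c • vsp k n i j := ⟨1, one_smul _ _⟩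
      have := (hsub hv).2 ((j:ℕ) : Fin (n+1))
      rw [simple, Equiv.swap_apply_left] at this
      rw [hvj1, hvj] at this
      exact hab this.symm
  · rw [hvj, hvj1]
    exact hab

end Spec
end Line
section Poly
open MvPolynomial

variable {k n}

theorem dvd_sub_aeval (a b : Fin (n+1)) (p : MvPolynomial (Fin (n+1)) k) :
    (X a - X b : MvPolynomial (Fin (n+1)) k) ∣
      p - aeval (R := k) (fun c => if c = b then (X a : MvPolynomial (Fin (n+1)) k) else X c) p := by
  induction p using MvPolynomial.induction_on with
  | C c => simp
  | add p q hp hq =>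
      have : p + q - aeval (R := k) (fun c => if c = b then (X a : MvPolynomial (Fin (n+1)) k) else X c) (p + q)
          = (p - aeval (R := k) (fun c => if c = b then (X a : MvPolynomial (Fin (n+1)) k) else X c) p)
            + (q - aeval (R := k) (fun c => if c = b then (X a : MvPolynomial (Fin (n+1)) k) else X c) q) := by
        rw [map_add]; ring
      rw [this]
      exact dvd_add hp hq
  | mul_X p m hp =>
      have hkey : p * X m - aeval (R := k) (fun c => if c = b then (X a : MvPolynomial (Fin (n+1)) k) else X c) (p * X m)
          = (p - aeval (R := k) (fun c => if c = b then (X a : MvPolynomial (Fin (n+1)) k) else X c) p) * X m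
            + (aeval (R := k) (fun c => if c = b then (X a : MvPolynomial (Fin (n+1)) k) else X c) p)
              * (X m - aeval (R := k) (fun c => if c = b then (X a : MvPolynomial (Fin (n+1)) k) else X c) (X m)) := by
        rw [map_mul]; ring
      rw [hkey]
      refine dvd_add (hp.mul_right _) (Dvd.dvd.mul_left ?_ _)
      rw [aeval_X]
      by_cases hmb : m = b
      · subst hmb
        rw [if_pos rfl]
        exact ⟨-1, by ring⟩
      · rw [if_neg hmb, sub_self]; exact dvd_zero _

theorem antisym_eq (a b : Fin (n+1)) (hab : a ≠ b)
    (p : MvPolynomial (Fin (n+1)) k) (hp : rename ⇑(Equiv.swap a b) p = -p) :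
    ∃ Q, rename ⇑(Equiv.swap a b) Q = Q ∧ p = (X a - X b) * Q := by
  have hφswap : ∀ q : MvPolynomial (Fin (n+1)) k,
      aeval (R := k) (fun c => if c = b then (X a : MvPolynomial (Fin (n+1)) k) else X c) (rename ⇑(Equiv.swap a b) q)
        = aeval (R := k) (fun c => if c = b then (X a : MvPolynomial (Fin (n+1)) k) else X c) q := by
    intro q
    rw [aeval_rename]
    have hfun : ((fun c => if c = b then (X a : MvPolynomial (Fin (n+1)) k) else X c) ∘ ⇑(Equiv.swap a b))
        = (fun c => if c = b then (X a : MvPolynomial (Fin (n+1)) k) else X c) := by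
      funext c
      simp only [Function.comp_apply]
      rcases eq_or_ne c a with rfl | hca
      · rw [Equiv.swap_apply_left, if_pos rfl, if_neg hab]
      rcases eq_or_ne c b with rfl | hcb
      · rw [Equiv.swap_apply_right, if_neg hab, if_pos rfl]
      · rw [Equiv.swap_apply_of_ne_of_ne hca hcb]
    rw [hfun]
  have hφ0 : aeval (R := k) (fun c => if c = b then (X a : MvPolynomial (Fin (n+1)) k) else X c) p = 0 := by
    have h1 := hφswap p
    rw [hp, map_neg] at h1
    have h2 : (2:k) • aeval (R := k) (fun c => if c = b then (X a : MvPolynomial (Fin (n+1)) k) else X c) p = 0 := by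
      rw [two_smul]
      linear_combination -h1
    rcases smul_eq_zero.mp h2 with h | h
    · exact absurd h two_ne_zero
    · exact h
  obtain ⟨Q, hQ⟩ := dvd_sub_aeval a b p
  rw [hφ0, sub_zero] at hQ
  have hXne : (X b - X a : MvPolynomial (Fin (n+1)) k) ≠ 0 := by
    intro h
    have := congrArg (eval (fun c : Fin (n+1) => if c = b then (1:k) else 0)) h
    simp only [map_sub, eval_X, map_zero, if_pos rfl, if_neg hab] at this
    norm_num at this
  refine ⟨Q, ?_, hQ⟩
  have hren : rename ⇑(Equiv.swap a b) ((X a - X b) * Q)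
      = (X b - X a) * rename ⇑(Equiv.swap a b) Q := by
    rw [map_mul, map_sub, rename_X, rename_X, Equiv.swap_apply_left, Equiv.swap_apply_right]
  have h3 : (X b - X a : MvPolynomial (Fin (n+1)) k) * rename ⇑(Equiv.swap a b) Q
      = (X b - X a) * Q := by
    rw [← hren, ← hQ, hp, hQ]
    ring
  exact mul_left_cancel₀ hXne h3

theorem decompose (a b : Fin (n+1)) (hab : a ≠ b) (p : MvPolynomial (Fin (n+1)) k) :
    ∃ P Q, rename ⇑(Equiv.swap a b) P = P ∧ rename ⇑(Equiv.swap a b) Q = Q ∧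
      p = P + (X a - X b) * Q := by
  have hρρ : ∀ q : MvPolynomial (Fin (n+1)) k,
      rename ⇑(Equiv.swap a b) (rename ⇑(Equiv.swap a b) q) = q := by
    intro q
    rw [rename_rename]
    have : ⇑(Equiv.swap a b) ∘ ⇑(Equiv.swap a b) = id := by
      funext m; simp [Equiv.swap_apply_self]
    rw [this, rename_id, AlgHom.id_apply]
  set P : MvPolynomial (Fin (n+1)) k := C ((2:k)⁻¹) * (p + rename ⇑(Equiv.swap a b) p) with hPdef
  set q' : MvPolynomial (Fin (n+1)) k := C ((2:k)⁻¹) * (p - rename ⇑(Equiv.swap a b) p) with hqdef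
  have hP : rename ⇑(Equiv.swap a b) P = P := by
    rw [hPdef, map_mul, map_add, rename_C, hρρ]
    ring
  have hq' : rename ⇑(Equiv.swap a b) q' = -q' := by
    rw [hqdef, map_mul, map_sub, rename_C, hρρ]
    ring
  obtain ⟨Q, hQinv, hQ⟩ := antisym_eq a b hab q' hq'
  have h2 : (C ((2:k)⁻¹) * (2:MvPolynomial (Fin (n+1)) k)) = 1 := by
    rw [show ((2:MvPolynomial (Fin (n+1)) k)) = C (2:k) from (map_ofNat C 2).symm, ← C_mul]
    norm_num
  refine ⟨P, Q, hP, hQinv, ?_⟩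
  rw [← hQ, hPdef, hqdef]
  linear_combination (-p) * h2

theorem eval_smul_line (v : Fin (n+1) → k) (q : MvPolynomial (Fin (n+1)) k) (c : k) :
    Polynomial.eval c (aeval (fun m => Polynomial.C (v m) * Polynomial.X) q) = eval (c • v) q := by
  induction q using MvPolynomial.induction_on with
  | C c' => simp
  | add p q hp hq => simp [hp, hq]
  | mul_X p m hp =>
      simp only [map_mul, aeval_X, Polynomial.eval_mul, Polynomial.eval_C, Polynomial.eval_X,
        eval_mul, eval_X, hp, Pi.smul_apply, smul_eq_mul]
      ring

end Poly
end Aux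
open Fin.NatCast in
/-- (0-indexed.)  Let `|i − j| > 1` and
`M := O(V_i ∩ V_j) ⊗_{O(V_j)^{s_j}} O(V_j)`.  Every `f ∈ O(V_j)` restricting to zero
on `V_i ∩ V_j` acts as zero on `M` (acting through the second factor); hence the right
`O(V_j)`-action factors through `O(V_j) → O(V_i ∩ V_j)`, and `M` is free as a right
`O(V_i ∩ V_j)`-module. -/
theorem right_action_factors_and_free_distant (i j : ℕ) (hi : i < n) (hj : j < n)
    (hdist : i + 1 < j ∨ j + 1 < i) :
    letI N := O k n (Vi k n i ∩ Vi k n j)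
    letI : Algebra (fixedO k n j) N :=
      ((res k n (Set.inter_subset_right : Vi k n i ∩ Vi k n j ⊆ Vi k n j)).comp
        (fixedO k n j).subtype).toAlgebra
    letI M := N ⊗[fixedO k n j] O k n (Vi k n j)
    letI incR : O k n (Vi k n j) →+* M := Algebra.TensorProduct.includeRight.toRingHom
    (∀ f : O k n (Vi k n j),
      res k n (Set.inter_subset_right : Vi k n i ∩ Vi k n j ⊆ Vi k n j) f = 0 →
      ∀ x : M, incR f * x = 0) ∧
    (∃ g : N →+* M,
      g.comp (res k n (Set.inter_subset_right : Vi k n i ∩ Vi k n j ⊆ Vi k n j)) = incR ∧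
      FreeVia g) := by
  classical
  letI : Algebra (fixedO k n j) (O k n (Vi k n i ∩ Vi k n j)) :=
    ((res k n (Set.inter_subset_right : Vi k n i ∩ Vi k n j ⊆ Vi k n j)).comp
      (fixedO k n j).subtype).toAlgebra
  -- notations
  have hWsub : Vi k n i ∩ Vi k n j ⊆ Vi k n j := Set.inter_subset_right
  set σj : Equiv.Perm (Fin (n+1)) := simple n j with hσjdef
  have hσswap : σj = Equiv.swap ((j : ℕ) : Fin (n+1)) ((j+1 : ℕ) : Fin (n+1)) := rfl
  set d : MvPolynomial (Fin (n+1)) k :=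
    MvPolynomial.X ((j : ℕ) : Fin (n+1)) - MvPolynomial.X ((j+1 : ℕ) : Fin (n+1)) with hddef
  have hd_ab : ((j : ℕ) : Fin (n+1)) ≠ ((j+1 : ℕ) : Fin (n+1)) :=
    fin_cast_ne (by omega) (by omega) (by omega)
  -- index distinctness
  have hIJ : ((i:ℕ) : Fin (n+1)) ≠ ((j:ℕ) : Fin (n+1)) := fin_cast_ne (by omega) (by omega) (by omega)
  have hIJ1 : ((i:ℕ) : Fin (n+1)) ≠ ((j+1:ℕ) : Fin (n+1)) := fin_cast_ne (by omega) (by omega) (by omega)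
  have hI1J : ((i+1:ℕ) : Fin (n+1)) ≠ ((j:ℕ) : Fin (n+1)) := fin_cast_ne (by omega) (by omega) (by omega)
  have hI1J1 : ((i+1:ℕ) : Fin (n+1)) ≠ ((j+1:ℕ) : Fin (n+1)) := fin_cast_ne (by omega) (by omega) (by omega)
  -- stability of V_j and (Vi k n i ∩ Vi k n j) under s_j
  have hstabJ : ∀ x ∈ Vi k n j, x ∘ ⇑σj ∈ Vi k n j := by
    intro x hx
    exact mem_Vt_comp (mul_inv_cancel_right σj σj) hx
  have hfix1 : σj ((i:ℕ) : Fin (n+1)) = ((i:ℕ) : Fin (n+1)) := by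
    rw [hσswap]; exact Equiv.swap_apply_of_ne_of_ne hIJ hIJ1
  have hfix2 : σj ((i+1:ℕ) : Fin (n+1)) = ((i+1:ℕ) : Fin (n+1)) := by
    rw [hσswap]; exact Equiv.swap_apply_of_ne_of_ne hI1J hI1J1
  have hconjI : σj * simple n i * σj⁻¹ = simple n i := by
    have hs := Equiv.swap_apply_apply σj ((i:ℕ) : Fin (n+1)) ((i+1:ℕ) : Fin (n+1))
    rw [hfix1, hfix2] at hs
    exact hs.symm
  have hstabW : ∀ x ∈ (Vi k n i ∩ Vi k n j), x ∘ ⇑σj ∈ (Vi k n i ∩ Vi k n j) := by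
    rintro x ⟨hx1, hx2⟩
    exact ⟨mem_Vt_comp hconjI hx1, mem_Vt_comp (mul_inv_cancel_right σj σj) hx2⟩
  -- special line facts
  obtain ⟨hlineW, hlinev⟩ := vsp_spec (k := k) i j hi hj hdist
  -- eval of d
  have hevald : ∀ x : Fin (n+1) → k, MvPolynomial.eval x d
      = x ((j : ℕ) : Fin (n+1)) - x ((j+1 : ℕ) : Fin (n+1)) := by
    intro x; simp [hddef]
  have hdW : ∀ x ∈ (Vi k n i ∩ Vi k n j), x ≠ 0 → MvPolynomial.eval x d ≠ 0 := by
    intro x hx hx0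
    rw [hevald]
    exact sub_ne_zero_of_ne (ne_of_mem_Vt (hσswap ▸ hx.2) hx0)
  -- non zero divisor property of d on (Vi k n i ∩ Vi k n j)
  have hNZD : ∀ q : MvPolynomial (Fin (n+1)) k,
      (∀ x ∈ (Vi k n i ∩ Vi k n j), MvPolynomial.eval x (d * q) = 0) → ∀ x ∈ (Vi k n i ∩ Vi k n j), MvPolynomial.eval x q = 0 := by
    intro q hq x hx
    rcases eq_or_ne x 0 with rfl | hx0
    · -- use the special line
      have hline0 : ∀ c : k, c ≠ 0 → MvPolynomial.eval (c • vsp k n i j) q = 0 := by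
        intro c hc
        have hmem := hlineW c
        have := hq _ hmem
        rw [map_mul, hevald] at this
        have hne : c • vsp k n i j ((j : ℕ) : Fin (n+1)) - c • vsp k n i j ((j+1 : ℕ) : Fin (n+1)) ≠ 0 := by
          simp only [Pi.smul_apply, smul_eq_mul]
          intro h0
          exact hlinev (mul_left_cancel₀ hc (by linear_combination h0))
        rcases mul_eq_zero.mp this with h | h
        · exact absurd h hne
        · exact h
      have hpoly : (MvPolynomial.aeval (fun m => Polynomial.C (vsp k n i j m) * Polynomial.X) q : Polynomial k) = 0 := by
        apply Polynomial.eq_zero_of_infinite_isRoot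
        apply Set.Infinite.mono (s := {c : k | c ≠ 0})
        · intro c hc
          show Polynomial.IsRoot _ c
          rw [Polynomial.IsRoot, eval_smul_line]
          exact hline0 c hc
        · exact Set.Finite.infinite_compl (Set.finite_singleton 0)
      have := eval_smul_line (vsp k n i j) q 0
      rw [hpoly] at this
      simpa using this.symm
    · have := hq x hx
      rw [map_mul] at this
      rcases mul_eq_zero.mp this with h | h
      · exact absurd h (hdW x hx hx0)
      · exact h
  -- vanishing of symmetric parts
  have hvanish : ∀ P Q : MvPolynomial (Fin (n+1)) k,
      MvPolynomial.rename ⇑σj P = P → MvPolynomial.rename ⇑σj Q = Q →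
      (∀ x ∈ (Vi k n i ∩ Vi k n j), MvPolynomial.eval x (P + d * Q) = 0) →
      (∀ x ∈ (Vi k n i ∩ Vi k n j), MvPolynomial.eval x P = 0) ∧ (∀ x ∈ (Vi k n i ∩ Vi k n j), MvPolynomial.eval x Q = 0) := by
    intro P Q hP hQ h
    have key : ∀ x ∈ (Vi k n i ∩ Vi k n j), MvPolynomial.eval x P = 0 ∧ MvPolynomial.eval x (d * Q) = 0 := by
      intro x hx
      have e1 := h x hx
      have e2 := h (x ∘ ⇑σj) (hstabW x hx)
      have hcomp : (x ∘ ⇑σj) ∘ ⇑σj = x := by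
        funext m
        simp only [Function.comp_apply, hσswap, Equiv.swap_apply_self]
      have hPe : MvPolynomial.eval (x ∘ ⇑σj) P = MvPolynomial.eval x P := by
        conv_lhs => rw [← hP]
        rw [MvPolynomial.eval_rename, hcomp]
      have hQe : MvPolynomial.eval (x ∘ ⇑σj) Q = MvPolynomial.eval x Q := by
        conv_lhs => rw [← hQ]
        rw [MvPolynomial.eval_rename, hcomp]
      have hde : MvPolynomial.eval (x ∘ ⇑σj) d = - MvPolynomial.eval x d := by
        rw [hevald, hevald]
        simp only [Function.comp_apply, hσswap, Equiv.swap_apply_left, Equiv.swap_apply_right]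
        ring
      rw [map_add, map_mul] at e1 e2
      rw [hPe, hQe, hde] at e2
      constructor
      · linear_combination (e1 + e2) / 2
      · rw [map_mul]
        linear_combination (e1 - e2) / 2
    exact ⟨fun x hx => (key x hx).1, hNZD Q (fun x hx => (key x hx).2)⟩
  -- ring-level notation
  set πj : MvPolynomial (Fin (n+1)) k →+* O k n (Vi k n j) :=
    Ideal.Quotient.mk (MvPolynomial.vanishingIdeal k (Vi k n j)) with hπj
  set πW : MvPolynomial (Fin (n+1)) k →+* O k n (Vi k n i ∩ Vi k n j) :=
    Ideal.Quotient.mk (MvPolynomial.vanishingIdeal k (Vi k n i ∩ Vi k n j)) with hπW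
  have hres : ∀ p : MvPolynomial (Fin (n+1)) k, res k n hWsub (πj p) = πW p := by
    intro p
    exact Ideal.Quotient.factor_mk _ p
  have hsurjj : ∀ f : O k n (Vi k n j), ∃ p, πj p = f := fun f => Ideal.Quotient.mk_surjective f
  have hsurjW : ∀ u : O k n (Vi k n i ∩ Vi k n j), ∃ p, πW p = u := fun u => Ideal.Quotient.mk_surjective u
  have hzeroW : ∀ p : MvPolynomial (Fin (n+1)) k,
      πW p = 0 ↔ ∀ x ∈ (Vi k n i ∩ Vi k n j), MvPolynomial.eval x p = 0 := by
    intro p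
    exact Ideal.Quotient.eq_zero_iff_mem.trans MvPolynomial.mem_vanishingIdeal_iff
  -- behaviour of the induced automorphisms
  have hσOj : ∀ p : MvPolynomial (Fin (n+1)) k,
      permO k n (simple n j) (Vi k n j) (πj p) = πj (MvPolynomial.rename ⇑σj p) := by
    intro p
    unfold permO
    exact (congrArg (fun φ : O k n (Vi k n j) →+* O k n (Vi k n j) => φ (πj p))
      (dite_cond_eq_true (eq_true (show ∀ x ∈ Vi k n j, x ∘ ⇑(simple n j) ∈ Vi k n j from hstabJ)))).trans
      (Ideal.Quotient.lift_mk _ _ _)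
  have hσN : ∀ p : MvPolynomial (Fin (n+1)) k,
      permO k n (simple n j) (Vi k n i ∩ Vi k n j) (πW p) = πW (MvPolynomial.rename ⇑σj p) := by
    intro p
    unfold permO
    exact (congrArg (fun φ : O k n (Vi k n i ∩ Vi k n j) →+* O k n (Vi k n i ∩ Vi k n j) => φ (πW p))
      (dite_cond_eq_true (eq_true (show ∀ x ∈ (Vi k n i ∩ Vi k n j), x ∘ ⇑(simple n j) ∈ (Vi k n i ∩ Vi k n j) from hstabW)))).trans
      (Ideal.Quotient.lift_mk _ _ _)
  -- membership of invariant polynomials in the fixed subring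
  have hAmem : ∀ P : MvPolynomial (Fin (n+1)) k,
      MvPolynomial.rename ⇑σj P = P → πj P ∈ fixedO k n j := by
    intro P hP
    show permO k n (simple n j) (Vi k n j) (πj P) = RingHom.id _ (πj P)
    rw [hσOj P, hP, RingHom.id_apply]
  have hfix : ∀ a : fixedO k n j, permO k n (simple n j) (Vi k n j) (↑a : O k n (Vi k n j)) = ↑a := by
    intro a
    exact a.2
  -- smul descriptions
  have hsmulN : ∀ (a : fixedO k n j) (x : O k n (Vi k n i ∩ Vi k n j)), a • x = res k n hWsub (↑a) * x := by
    intro a x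
    exact Algebra.smul_def a x
  have hsmulOj : ∀ (a : fixedO k n j) (f : O k n (Vi k n j)), a • f = (↑a : O k n (Vi k n j)) * f := by
    intro a f
    rfl
  -- Lemma A : polynomials vanishing on (Vi k n i ∩ Vi k n j) give zero tensors 1 ⊗ p
  have hA0 : ∀ p : MvPolynomial (Fin (n+1)) k, (∀ x ∈ (Vi k n i ∩ Vi k n j), MvPolynomial.eval x p = 0) →
      ((1 : O k n (Vi k n i ∩ Vi k n j)) ⊗ₜ[fixedO k n j] (πj p) : O k n (Vi k n i ∩ Vi k n j) ⊗[fixedO k n j] O k n (Vi k n j)) = 0 := by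
    intro p hp
    obtain ⟨P, Q, hPinv, hQinv, hpd⟩ := decompose ((j : ℕ) : Fin (n+1)) ((j+1 : ℕ) : Fin (n+1)) hd_ab p
    have hPinv' : MvPolynomial.rename ⇑σj P = P := by rw [hσswap]; exact hPinv
    have hQinv' : MvPolynomial.rename ⇑σj Q = Q := by rw [hσswap]; exact hQinv
    have hpd' : p = P + d * Q := hpd
    obtain ⟨hPv, hQv⟩ := hvanish P Q hPinv' hQinv' (by rw [← hpd']; exact hp)
    have aP : fixedO k n j := ⟨πj P, hAmem P hPinv'⟩
    have aQ : fixedO k n j := ⟨πj Q, hAmem Q hQinv'⟩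
    have hsplit : πj p = πj P + πj d * πj Q := by
      rw [hpd', map_add, map_mul]
    rw [hsplit, TensorProduct.tmul_add]
    have hterm1 : ((1 : O k n (Vi k n i ∩ Vi k n j)) ⊗ₜ[fixedO k n j] (πj P) : O k n (Vi k n i ∩ Vi k n j) ⊗[fixedO k n j] O k n (Vi k n j)) = 0 := by
      have h1 : (πj P : O k n (Vi k n j)) = (⟨πj P, hAmem P hPinv'⟩ : fixedO k n j) • (1 : O k n (Vi k n j)) := by
        rw [hsmulOj, mul_one]
      rw [h1, TensorProduct.tmul_smul, TensorProduct.smul_tmul', hsmulN, hres]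
      rw [(hzeroW P).2 hPv]
      simp
    have hterm2 : ((1 : O k n (Vi k n i ∩ Vi k n j)) ⊗ₜ[fixedO k n j] (πj d * πj Q) : O k n (Vi k n i ∩ Vi k n j) ⊗[fixedO k n j] O k n (Vi k n j)) = 0 := by
      have h1 : (πj d * πj Q : O k n (Vi k n j)) = (⟨πj Q, hAmem Q hQinv'⟩ : fixedO k n j) • (πj d) := by
        rw [hsmulOj, mul_comm]
      rw [h1, TensorProduct.tmul_smul, TensorProduct.smul_tmul', hsmulN, hres]
      rw [(hzeroW Q).2 hQv]
      simp
    rw [hterm1, hterm2, add_zero]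
  -- the inclusion of the right factor, concretely
  have hincR : ∀ f : O k n (Vi k n j),
      (Algebra.TensorProduct.includeRight.toRingHom :
          O k n (Vi k n j) →+* O k n (Vi k n i ∩ Vi k n j) ⊗[fixedO k n j] O k n (Vi k n j)) f
        = (1 : O k n (Vi k n i ∩ Vi k n j)) ⊗ₜ[fixedO k n j] f := fun f => rfl
  -- cancellation of 2 in O(W)
  have h2cancel : ∀ z : O k n (Vi k n i ∩ Vi k n j), z + z = 0 → z = 0 := by
    intro z hzz
    obtain ⟨q, rfl⟩ := hsurjW z
    rw [(hzeroW q).2 ?_]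
    intro x hx
    have h1 : πW (q + q) = 0 := by rw [map_add, hzz]
    have h2 := (hzeroW (q + q)).1 h1 x hx
    rw [map_add] at h2
    have h3 : (2 : k) * MvPolynomial.eval x q = 0 := by linear_combination h2
    exact (mul_eq_zero.mp h3).resolve_left two_ne_zero
  -- spanning of the tensor product
  have hspan : ∀ m : O k n (Vi k n i ∩ Vi k n j) ⊗[fixedO k n j] O k n (Vi k n j),
      ∃ f₀ f₁ : O k n (Vi k n j),
        m = (1 : O k n (Vi k n i ∩ Vi k n j)) ⊗ₜ[fixedO k n j] f₀
          + (πW d) ⊗ₜ[fixedO k n j] f₁ := by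
    intro m
    induction m with
    | zero => exact ⟨0, 0, by simp⟩
    | tmul x f =>
        obtain ⟨s, rfl⟩ := hsurjW x
        obtain ⟨P, Q, hPinv, hQinv, hpd⟩ :=
          decompose ((j : ℕ) : Fin (n+1)) ((j+1 : ℕ) : Fin (n+1)) hd_ab s
        have hPinv' : MvPolynomial.rename ⇑σj P = P := by rw [hσswap]; exact hPinv
        have hQinv' : MvPolynomial.rename ⇑σj Q = Q := by rw [hσswap]; exact hQinv
        refine ⟨πj P * f, πj Q * f, ?_⟩
        have hsplit : πW s = πW P + πW d * πW Q := by
          rw [show s = P + d * Q from hpd, map_add, map_mul]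
        rw [hsplit, TensorProduct.add_tmul]
        congr 1
        · have h1 : πW P = (⟨πj P, hAmem P hPinv'⟩ : fixedO k n j) • (1 : O k n (Vi k n i ∩ Vi k n j)) := by
            rw [hsmulN, hres, mul_one]
          rw [h1, TensorProduct.smul_tmul, hsmulOj]
        · have h1 : πW d * πW Q = (⟨πj Q, hAmem Q hQinv'⟩ : fixedO k n j) • (πW d) := by
            rw [hsmulN, hres, mul_comm]
          rw [h1, TensorProduct.smul_tmul, hsmulOj]
    | add m1 m2 h1 h2 =>
        obtain ⟨f₀, f₁, rfl⟩ := h1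
        obtain ⟨g₀, g₁, rfl⟩ := h2
        refine ⟨f₀ + g₀, f₁ + g₁, by rw [TensorProduct.tmul_add, TensorProduct.tmul_add]; ring⟩
  -- building additive functionals on the tensor product
  have mkPhi : ∀ (τ : O k n (Vi k n i ∩ Vi k n j) →+* O k n (Vi k n i ∩ Vi k n j)),
      (∀ (r : fixedO k n j) (x : O k n (Vi k n i ∩ Vi k n j)),
        τ (r • x) = res k n hWsub ↑r * τ x) →
      ∀ (ℓ : O k n (Vi k n j) → O k n (Vi k n i ∩ Vi k n j)),
      (∀ f1 f2, ℓ (f1 + f2) = ℓ f1 + ℓ f2) →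
      (∀ (r : fixedO k n j) (f : O k n (Vi k n j)), ℓ (r • f) = res k n hWsub ↑r * ℓ f) →
      ∃ Φ : (O k n (Vi k n i ∩ Vi k n j) ⊗[fixedO k n j] O k n (Vi k n j)) →+
          O k n (Vi k n i ∩ Vi k n j),
        ∀ (x : O k n (Vi k n i ∩ Vi k n j)) (f : O k n (Vi k n j)),
          Φ (x ⊗ₜ[fixedO k n j] f) = τ x * ℓ f := by
    intro τ hτ ℓ hadd hsc
    refine ⟨TensorProduct.liftAddHom
      (AddMonoidHom.mk' (fun x => AddMonoidHom.mk' (fun f => τ x * ℓ f)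
          (fun f1 f2 => by beta_reduce; rw [hadd, mul_add]))
        (fun x y => by
          apply AddMonoidHom.ext
          intro f
          show τ (x + y) * ℓ f = τ x * ℓ f + τ y * ℓ f
          rw [map_add, add_mul]))
      (fun r x f => by
        show τ (r • x) * ℓ f = τ x * ℓ (r • f)
        rw [hτ, hsc]
        ring),
      fun x f => rfl⟩
  -- scalar compatibility of the two auxiliary maps
  have hle : ∀ (r : fixedO k n j) (f : O k n (Vi k n j)),
      (res k n hWsub (r • f) + res k n hWsub (permO k n (simple n j) (Vi k n j) (r • f)))
        = res k n hWsub ↑r *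
          (res k n hWsub f + res k n hWsub (permO k n (simple n j) (Vi k n j) f)) := by
    intro r f
    rw [hsmulOj, map_mul, map_mul, hfix r, map_mul]
    ring
  have hlo : ∀ (r : fixedO k n j) (f : O k n (Vi k n j)),
      (res k n hWsub (r • f) - res k n hWsub (permO k n (simple n j) (Vi k n j) (r • f)))
        = res k n hWsub ↑r *
          (res k n hWsub f - res k n hWsub (permO k n (simple n j) (Vi k n j) f)) := by
    intro r f
    rw [hsmulOj, map_mul, map_mul, hfix r, map_mul]
    ring
  have hτid : ∀ (r : fixedO k n j) (x : O k n (Vi k n i ∩ Vi k n j)),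
      (RingHom.id (O k n (Vi k n i ∩ Vi k n j))) (r • x)
        = res k n hWsub ↑r * (RingHom.id (O k n (Vi k n i ∩ Vi k n j))) x := by
    intro r x
    rw [RingHom.id_apply, RingHom.id_apply, hsmulN]
  have hτσcoe : ∀ (r : fixedO k n j),
      permO k n (simple n j) (Vi k n i ∩ Vi k n j) (res k n hWsub ↑r) = res k n hWsub ↑r := by
    intro r
    obtain ⟨pa, hpa⟩ := hsurjj (↑r : O k n (Vi k n j))
    have h1 : πj (MvPolynomial.rename ⇑σj pa) = πj pa := by
      rw [← hσOj pa, hpa, hfix r]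
    have h2 : res k n hWsub (↑r : O k n (Vi k n j)) = πW pa := by rw [← hpa, hres]
    rw [h2, hσN pa, ← hres, h1, hres]
  have hτσ : ∀ (r : fixedO k n j) (x : O k n (Vi k n i ∩ Vi k n j)),
      permO k n (simple n j) (Vi k n i ∩ Vi k n j) (r • x)
        = res k n hWsub ↑r * permO k n (simple n j) (Vi k n i ∩ Vi k n j) x := by
    intro r x
    rw [hsmulN, map_mul, hτσcoe]
  -- the image of d under the twist
  have hρd : MvPolynomial.rename ⇑σj d = -d := by
    rw [hddef, map_sub, MvPolynomial.rename_X, MvPolynomial.rename_X, hσswap,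
      Equiv.swap_apply_left, Equiv.swap_apply_right]
    ring
  -- Lemma U : uniqueness of coefficients
  have hLemU : ∀ p₀ p₁ : MvPolynomial (Fin (n+1)) k,
      ((1 : O k n (Vi k n i ∩ Vi k n j)) ⊗ₜ[fixedO k n j] (πj p₀)
        + (πW d) ⊗ₜ[fixedO k n j] (πj p₁) :
          O k n (Vi k n i ∩ Vi k n j) ⊗[fixedO k n j] O k n (Vi k n j)) = 0 →
      πW p₀ = 0 ∧ πW p₁ = 0 := by
    intro p₀ p₁ hz
    obtain ⟨Φ1, hΦ1⟩ := mkPhi (RingHom.id _) hτid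
      (fun f => res k n hWsub f + res k n hWsub (permO k n (simple n j) (Vi k n j) f))
      (fun f1 f2 => by beta_reduce; simp only [map_add]; ring) hle
    obtain ⟨Φ2, hΦ2⟩ := mkPhi (RingHom.id _) hτid
      (fun f => res k n hWsub f - res k n hWsub (permO k n (simple n j) (Vi k n j) f))
      (fun f1 f2 => by beta_reduce; simp only [map_add]; ring) hlo
    obtain ⟨Φ3, hΦ3⟩ := mkPhi (permO k n (simple n j) (Vi k n i ∩ Vi k n j)) hτσ
      (fun f => res k n hWsub f + res k n hWsub (permO k n (simple n j) (Vi k n j) f))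
      (fun f1 f2 => by beta_reduce; simp only [map_add]; ring) hle
    obtain ⟨Φ4, hΦ4⟩ := mkPhi (permO k n (simple n j) (Vi k n i ∩ Vi k n j)) hτσ
      (fun f => res k n hWsub f - res k n hWsub (permO k n (simple n j) (Vi k n j) f))
      (fun f1 f2 => by beta_reduce; simp only [map_add]; ring) hlo
    have hσNd : permO k n (simple n j) (Vi k n i ∩ Vi k n j) (πW d) = -πW d := by
      rw [hσN, hρd, map_neg]
    have hσN1 : permO k n (simple n j) (Vi k n i ∩ Vi k n j) (1 : O k n (Vi k n i ∩ Vi k n j)) = 1 :=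
      map_one _
    have hcomp0 : res k n hWsub (πj p₀)
        + res k n hWsub (permO k n (simple n j) (Vi k n j) (πj p₀))
        = πW p₀ + πW (MvPolynomial.rename ⇑σj p₀) := by
      rw [hres, hσOj, hres]
    have hcomp0' : res k n hWsub (πj p₀)
        - res k n hWsub (permO k n (simple n j) (Vi k n j) (πj p₀))
        = πW p₀ - πW (MvPolynomial.rename ⇑σj p₀) := by
      rw [hres, hσOj, hres]
    have hcomp1 : res k n hWsub (πj p₁)
        + res k n hWsub (permO k n (simple n j) (Vi k n j) (πj p₁))
        = πW p₁ + πW (MvPolynomial.rename ⇑σj p₁) := by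
      rw [hres, hσOj, hres]
    have hcomp1' : res k n hWsub (πj p₁)
        - res k n hWsub (permO k n (simple n j) (Vi k n j) (πj p₁))
        = πW p₁ - πW (MvPolynomial.rename ⇑σj p₁) := by
      rw [hres, hσOj, hres]
    have e1 := congrArg Φ1 hz
    rw [map_add, map_zero, hΦ1, hΦ1, RingHom.id_apply, RingHom.id_apply, one_mul] at e1
    rw [hcomp0, hcomp1] at e1
    have e2 := congrArg Φ2 hz
    rw [map_add, map_zero, hΦ2, hΦ2, RingHom.id_apply, RingHom.id_apply, one_mul] at e2
    rw [hcomp0', hcomp1'] at e2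
    have e3 := congrArg Φ3 hz
    rw [map_add, map_zero, hΦ3, hΦ3, hσN1, hσNd, one_mul] at e3
    rw [hcomp0, hcomp1] at e3
    have e4 := congrArg Φ4 hz
    rw [map_add, map_zero, hΦ4, hΦ4, hσN1, hσNd, one_mul] at e4
    rw [hcomp0', hcomp1'] at e4
    -- extract the vanishing of the coefficients
    have hs1 : πW p₀ + πW (MvPolynomial.rename ⇑σj p₀) = 0 := by
      apply h2cancel
      linear_combination e1 + e3
    have hs2 : πW p₀ - πW (MvPolynomial.rename ⇑σj p₀) = 0 := by
      apply h2cancel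
      linear_combination e2 + e4
    have hp₀ : πW p₀ = 0 := by
      apply h2cancel
      linear_combination hs1 + hs2
    have hs3 : πW d * (πW p₁ + πW (MvPolynomial.rename ⇑σj p₁)) = 0 := by
      apply h2cancel
      linear_combination e1 - e3
    have hs4 : πW d * (πW p₁ - πW (MvPolynomial.rename ⇑σj p₁)) = 0 := by
      apply h2cancel
      linear_combination e2 - e4
    have hdB : πW (d * p₁) = 0 := by
      rw [map_mul]
      apply h2cancel
      linear_combination hs3 + hs4
    have hp₁ : πW p₁ = 0 :=
      (hzeroW p₁).2 (hNZD p₁ ((hzeroW (d * p₁)).1 hdB))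
    exact ⟨hp₀, hp₁⟩
  -- ### the two parts of the statement
  refine ⟨?_, ?_⟩
  · -- part 1
    intro f hf x
    obtain ⟨p, rfl⟩ := hsurjj f
    have h0 : πW p = 0 := by
      rw [← hres p]
      exact hf
    have hv := (hzeroW p).1 h0
    have hz : (Algebra.TensorProduct.includeRight.toRingHom :
        O k n (Vi k n j) →+* O k n (Vi k n i ∩ Vi k n j) ⊗[fixedO k n j] O k n (Vi k n j)) (πj p) = 0 := by
      rw [hincR]
      exact hA0 p hv
    rw [hz, zero_mul]
  · -- part 2
    have hker : ∀ p ∈ MvPolynomial.vanishingIdeal k (Vi k n i ∩ Vi k n j),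
        ((Algebra.TensorProduct.includeRight.toRingHom :
          O k n (Vi k n j) →+* O k n (Vi k n i ∩ Vi k n j) ⊗[fixedO k n j] O k n (Vi k n j)).comp πj) p = 0 := by
      intro p hp
      rw [RingHom.comp_apply, hincR]
      exact hA0 p (MvPolynomial.mem_vanishingIdeal_iff.1 hp)
    refine ⟨Ideal.Quotient.lift (MvPolynomial.vanishingIdeal k (Vi k n i ∩ Vi k n j))
      ((Algebra.TensorProduct.includeRight.toRingHom :
          O k n (Vi k n j) →+* O k n (Vi k n i ∩ Vi k n j) ⊗[fixedO k n j] O k n (Vi k n j)).comp πj) hker, ?_, ?_⟩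
    · -- g ∘ res = incR
      apply RingHom.ext
      intro f
      obtain ⟨p, rfl⟩ := hsurjj f
      erw [RingHom.comp_apply]
    · -- freeness
      have hg_mk : ∀ p : MvPolynomial (Fin (n+1)) k,
          Ideal.Quotient.lift (MvPolynomial.vanishingIdeal k (Vi k n i ∩ Vi k n j))
            ((Algebra.TensorProduct.includeRight.toRingHom :
          O k n (Vi k n j) →+* O k n (Vi k n i ∩ Vi k n j) ⊗[fixedO k n j] O k n (Vi k n j)).comp πj) hker (πW p)
          = (1 : O k n (Vi k n i ∩ Vi k n j)) ⊗ₜ[fixedO k n j] (πj p) := by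
        intro p
        exact Ideal.Quotient.lift_mk _ _ _
      refine ⟨Bool, fun s => if s then (πW d) ⊗ₜ[fixedO k n j] (1 : O k n (Vi k n j))
        else (1 : O k n (Vi k n i ∩ Vi k n j)) ⊗ₜ[fixedO k n j] (1 : O k n (Vi k n j)), ?_⟩
      intro x
      have hsum : ∀ c : Bool →₀ O k n (Vi k n i ∩ Vi k n j),
          (c.sum fun s r =>
            Ideal.Quotient.lift (MvPolynomial.vanishingIdeal k (Vi k n i ∩ Vi k n j))
              ((Algebra.TensorProduct.includeRight.toRingHom :
          O k n (Vi k n j) →+* O k n (Vi k n i ∩ Vi k n j) ⊗[fixedO k n j] O k n (Vi k n j)).comp πj) hker r *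
            (if s then (πW d) ⊗ₜ[fixedO k n j] (1 : O k n (Vi k n j))
              else (1 : O k n (Vi k n i ∩ Vi k n j)) ⊗ₜ[fixedO k n j] (1 : O k n (Vi k n j))))
          = Ideal.Quotient.lift (MvPolynomial.vanishingIdeal k (Vi k n i ∩ Vi k n j))
              ((Algebra.TensorProduct.includeRight.toRingHom :
          O k n (Vi k n j) →+* O k n (Vi k n i ∩ Vi k n j) ⊗[fixedO k n j] O k n (Vi k n j)).comp πj) hker (c true) *
              ((πW d) ⊗ₜ[fixedO k n j] (1 : O k n (Vi k n j)))
            + Ideal.Quotient.lift (MvPolynomial.vanishingIdeal k (Vi k n i ∩ Vi k n j))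
              ((Algebra.TensorProduct.includeRight.toRingHom :
          O k n (Vi k n j) →+* O k n (Vi k n i ∩ Vi k n j) ⊗[fixedO k n j] O k n (Vi k n j)).comp πj) hker (c false) *
              ((1 : O k n (Vi k n i ∩ Vi k n j)) ⊗ₜ[fixedO k n j] (1 : O k n (Vi k n j))) := by
        intro c
        rw [Finsupp.sum_fintype _ _ (fun s => by erw [map_zero, zero_mul])]
        rw [Fintype.sum_bool]
        simp
      obtain ⟨f₀, f₁, rfl⟩ := hspan x
      have hgres : ∀ f : O k n (Vi k n j),
          Ideal.Quotient.lift (MvPolynomial.vanishingIdeal k (Vi k n i ∩ Vi k n j))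
            ((Algebra.TensorProduct.includeRight.toRingHom :
          O k n (Vi k n j) →+* O k n (Vi k n i ∩ Vi k n j) ⊗[fixedO k n j] O k n (Vi k n j)).comp πj) hker (res k n hWsub f)
          = (1 : O k n (Vi k n i ∩ Vi k n j)) ⊗ₜ[fixedO k n j] f := by
        intro f
        obtain ⟨p, rfl⟩ := hsurjj f
        rw [hres, hg_mk]
      refine ⟨Finsupp.equivFunOnFinite.symm
        (fun s => if s then res k n hWsub f₁ else res k n hWsub f₀), ?_, ?_⟩
      · beta_reduce
        refine Eq.trans ?_ (hsum _).symm
        simp only [Finsupp.coe_equivFunOnFinite_symm, Bool.false_eq_true, if_true, if_false]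
        rw [hgres, hgres]
        rw [Algebra.TensorProduct.tmul_mul_tmul, Algebra.TensorProduct.tmul_mul_tmul]
        simp only [one_mul, mul_one]
        ring
      · intro c' hc'
        beta_reduce at hc'
        obtain ⟨p0, hp0⟩ := hsurjW (c' false - res k n hWsub f₀)
        obtain ⟨p1, hp1⟩ := hsurjW (c' true - res k n hWsub f₁)
        have hc0 : c' false = res k n hWsub f₀ + πW p0 := by rw [hp0]; ring
        have hc1 : c' true = res k n hWsub f₁ + πW p1 := by rw [hp1]; ring
        have heq : (c'.sum fun s r =>
            Ideal.Quotient.lift (MvPolynomial.vanishingIdeal k (Vi k n i ∩ Vi k n j))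
              ((Algebra.TensorProduct.includeRight.toRingHom :
          O k n (Vi k n j) →+* O k n (Vi k n i ∩ Vi k n j) ⊗[fixedO k n j] O k n (Vi k n j)).comp πj) hker r *
            (if s then (πW d) ⊗ₜ[fixedO k n j] (1 : O k n (Vi k n j))
              else (1 : O k n (Vi k n i ∩ Vi k n j)) ⊗ₜ[fixedO k n j] (1 : O k n (Vi k n j))))
            = ((1 : O k n (Vi k n i ∩ Vi k n j)) ⊗ₜ[fixedO k n j] f₀
                + (πW d) ⊗ₜ[fixedO k n j] f₁)
              + ((1 : O k n (Vi k n i ∩ Vi k n j)) ⊗ₜ[fixedO k n j] (πj p0)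
                + (πW d) ⊗ₜ[fixedO k n j] (πj p1)) := by
          refine (hsum c').trans ?_
          rw [hc0, hc1]
          erw [map_add, map_add]
          rw [hgres, hgres, hg_mk, hg_mk]
          rw [add_mul, add_mul]
          rw [Algebra.TensorProduct.tmul_mul_tmul, Algebra.TensorProduct.tmul_mul_tmul,
            Algebra.TensorProduct.tmul_mul_tmul, Algebra.TensorProduct.tmul_mul_tmul]
          simp only [one_mul, mul_one]
          ring
        have hzero : ((1 : O k n (Vi k n i ∩ Vi k n j)) ⊗ₜ[fixedO k n j] (πj p0)
            + (πW d) ⊗ₜ[fixedO k n j] (πj p1) :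
              O k n (Vi k n i ∩ Vi k n j) ⊗[fixedO k n j] O k n (Vi k n j)) = 0 := by
          have h5 := hc'.trans heq
          linear_combination -h5
        obtain ⟨hz0, hz1⟩ := hLemU p0 p1 hzero
        have hcf0 : c' false = res k n hWsub f₀ := by rw [hc0, hz0, add_zero]
        have hcf1 : c' true = res k n hWsub f₁ := by rw [hc1, hz1, add_zero]
        apply Finsupp.ext
        intro s
        cases s
        · rw [hcf0]
          simp
        · rw [hcf1]
          simp

end TLpaper
end
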